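/- arXiv:1401.5905 — 8 statements merged into one kernel-verified Lean document; each statement's English description precedes it below -/
import Mathlib

section
/- Let ABC and ABD be triangles sharing side AB with AC = AD and ∠ABC = ∠ABD. Then either BC = BD (so the triangles are congruent), or ∠ACB + ∠ADB = π. -/
open EuclideanGeometry

theorem stmt1 (A B C D : EuclideanSpace ℝ (Fin 2))
    (hABC : AffineIndependent ℝ ![A, B, C])
    (hABD : AffineIndependent ℝ ![A, B, D])
    (hAC : dist A C = dist A D)
    (hang : ∠ A B C = ∠ A B D) :
    dist B C = dist B D ∨ ∠ A C B + ∠ A D B = Real.pi := by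
  by_cases hcd : dist B C = dist B D
  · exact Or.inl hcd
  right
  have hACne : A ≠ C := by
    have := hABC.injective.ne (show (0 : Fin 3) ≠ 2 by decide)
    simpa using this
  have hBCne : B ≠ C := by
    have := hABC.injective.ne (show (1 : Fin 3) ≠ 2 by decide)
    simpa using this
  have hBDne : B ≠ D := by
    have := hABD.injective.ne (show (1 : Fin 3) ≠ 2 by decide)
    simpa using this
  have hb : 0 < dist A C := dist_pos.2 hACne
  have hc : 0 < dist B C := dist_pos.2 hBCne
  have hd : 0 < dist B D := dist_pos.2 hBDne
  have l1 := EuclideanGeometry.law_cos A B C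
  have l2 := EuclideanGeometry.law_cos A B D
  have l3 := EuclideanGeometry.law_cos A C B
  have l4 := EuclideanGeometry.law_cos A D B
  rw [dist_comm C B] at l1
  rw [← hang, ← hAC, dist_comm D B] at l2
  rw [← hAC] at l4
  -- c + d = 2 a cos θ
  have h5 : (dist B C - dist B D) *
      (dist B C + dist B D - 2 * dist A B * Real.cos (∠ A B C)) = 0 := by
    nlinarith [l1, l2]
  have hsum : dist B C + dist B D = 2 * dist A B * Real.cos (∠ A B C) := by
    rcases mul_eq_zero.1 h5 with h | h
    · exact absurd (by linarith : dist B C = dist B D) hcd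
    · linarith
  have hprod : dist B C * dist B D = dist A B * dist A B - dist A C * dist A C := by
    nlinarith [l1, hsum]
  have key : 2 * dist A C * dist B C * dist B D *
      (Real.cos (∠ A C B) + Real.cos (∠ A D B)) = 0 := by
    linear_combination (dist B D : ℝ) * l3 + dist B C * l4 +
      (dist B C + dist B D) * hprod
  have hzero : Real.cos (∠ A C B) + Real.cos (∠ A D B) = 0 := by
    have hne : (2 : ℝ) * dist A C * dist B C * dist B D ≠ 0 := by positivity
    exact (mul_eq_zero.1 key).resolve_left hne
  have hcos : Real.cos (∠ A D B) = Real.cos (Real.pi - ∠ A C B) := by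
    rw [Real.cos_pi_sub]; linarith
  have h1 := EuclideanGeometry.angle_nonneg A C B
  have h2 := EuclideanGeometry.angle_le_pi A C B
  have h3 := EuclideanGeometry.angle_nonneg A D B
  have h4 := EuclideanGeometry.angle_le_pi A D B
  have := Real.injOn_cos ⟨h3, h4⟩ ⟨by linarith, by linarith⟩ hcos
  linarith
end

section
/- Let F, D, E be the midpoints of sides BC, CA, AB of triangle ABC, and let G be the circumcenter of triangle FDE. If G lies on the internal bisector of angle ACB, then either CA = CB, or ∠ACB = 60°. -/
open EuclideanGeometry
open scoped RealInnerProductSpace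

theorem stmt6 (A B C G : EuclideanSpace ℝ (Fin 2))
    (hABC : AffineIndependent ℝ ![A, B, C])
    (F : EuclideanSpace ℝ (Fin 2)) (hF : F = midpoint ℝ B C)
    (D : EuclideanSpace ℝ (Fin 2)) (hD : D = midpoint ℝ C A)
    (E : EuclideanSpace ℝ (Fin 2)) (hE : E = midpoint ℝ A B)
    (hGF : dist G F = dist G D) (hGD : dist G D = dist G E)
    (hGC : G ≠ C)
    (hbis : ∠ A C G = ∠ B C G) :
    dist C A = dist C B ∨ ∠ A C B = Real.pi / 3 := by
  set u := A - C with hu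
  set v := B - C with hv
  set g := G - C with hg
  have hAC : A ≠ C := by
    intro h
    exact (by decide : (0:Fin 3) ≠ 2)
      (hABC.injective (show ![A,B,C] 0 = ![A,B,C] 2 by simp [h]))
  have hBC : B ≠ C := by
    intro h
    exact (by decide : (1:Fin 3) ≠ 2)
      (hABC.injective (show ![A,B,C] 1 = ![A,B,C] 2 by simp [h]))
  have hu0 : u ≠ 0 := sub_ne_zero.mpr hAC
  have hv0 : v ≠ 0 := sub_ne_zero.mpr hBC
  have hg0 : g ≠ 0 := sub_ne_zero.mpr hGC
  have hmid : ∀ x y : EuclideanSpace ℝ (Fin 2), midpoint ℝ x y = (1/2:ℝ) • (x+y) := by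
    intro x y
    rw [midpoint_eq_smul_add]
    norm_num
  have l : ∀ w : EuclideanSpace ℝ (Fin 2),
      ‖g - (1/2:ℝ)•w‖^2 = ‖g‖^2 - (inner ℝ g w : ℝ) + (1/4)*‖w‖^2 := by
    intro w
    rw [norm_sub_sq_real, real_inner_smul_right, norm_smul]
    simp
    ring
  have hGF' : ‖g - (1/2:ℝ)•v‖ = ‖g - (1/2:ℝ)•u‖ := by
    have h1 : G - F = g - (1/2:ℝ)•v := by rw [hF, hmid, hg, hv]; module
    have h2 : G - D = g - (1/2:ℝ)•u := by rw [hD, hmid, hg, hu]; module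
    rw [dist_eq_norm, dist_eq_norm, h1, h2] at hGF
    exact hGF
  have hGD' : ‖g - (1/2:ℝ)•u‖ = ‖g - (1/2:ℝ)•(u+v)‖ := by
    have h2 : G - D = g - (1/2:ℝ)•u := by rw [hD, hmid, hg, hu]; module
    have h3 : G - E = g - (1/2:ℝ)•(u+v) := by rw [hE, hmid, hg, hu, hv]; module
    rw [dist_eq_norm, dist_eq_norm, h2, h3] at hGD
    exact hGD
  have eq1 : (inner ℝ g u : ℝ) - (inner ℝ g v : ℝ) = (‖u‖^2 - ‖v‖^2)/4 := by
    have h := congrArg (·^2) hGF'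
    simp only [l] at h
    linarith
  have eq2 : (inner ℝ g v : ℝ) = (‖v‖^2 + 2*(inner ℝ u v : ℝ))/4 := by
    have h := congrArg (·^2) hGD'
    simp only [l] at h
    rw [inner_add_right, norm_add_sq_real] at h
    linarith
  have hcos := congrArg Real.cos hbis
  rw [EuclideanGeometry.angle, EuclideanGeometry.angle,
    InnerProductGeometry.cos_angle, InnerProductGeometry.cos_angle] at hcos
  simp only [vsub_eq_sub, ← hu, ← hv, ← hg] at hcos
  have hnu : ‖u‖ ≠ 0 := norm_ne_zero_iff.mpr hu0
  have hnv : ‖v‖ ≠ 0 := norm_ne_zero_iff.mpr hv0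
  have hng : ‖g‖ ≠ 0 := norm_ne_zero_iff.mpr hg0
  have hcos' : (inner ℝ u g : ℝ) * ‖v‖ = (inner ℝ v g : ℝ) * ‖u‖ := by
    rw [div_eq_div_iff (by positivity) (by positivity)] at hcos
    exact mul_right_cancel₀ hng (by linear_combination hcos)
  have e3 : (inner ℝ g u : ℝ) = (‖u‖^2 + 2*(inner ℝ u v : ℝ))/4 := by linarith
  rw [real_inner_comm g u, real_inner_comm g v, e3, eq2] at hcos'
  have key : (‖u‖ - ‖v‖) * (‖u‖*‖v‖ - 2*(inner ℝ u v : ℝ)) = 0 := by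
    linear_combination 4*hcos'
  rcases mul_eq_zero.mp key with h1 | h2
  · left
    have huv : ‖u‖ = ‖v‖ := by linarith
    rw [dist_comm C A, dist_comm C B, dist_eq_norm, dist_eq_norm, ← hu, ← hv]
    exact huv
  · right
    rw [EuclideanGeometry.angle, InnerProductGeometry.angle]
    simp only [vsub_eq_sub, ← hu, ← hv]
    have hr : (inner ℝ u v : ℝ)/(‖u‖*‖v‖) = 1/2 := by
      rw [div_eq_iff (by positivity)]
      linarith
    rw [hr, show (1/2:ℝ) = Real.cos (Real.pi/3) from Real.cos_pi_div_three.symm]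
    exact Real.arccos_cos (by positivity) (by linarith [Real.pi_pos])
end

section
/- In triangle ABC, let AA₁ (A₁ on BC) and BB₁ (B₁ on AC) be the internal bisectors of angles CAB and CBA, meeting at the incenter J. If JA₁ = JB₁, then either CA = CB or ∠ACB = 60°. -/
open EuclideanGeometry Real

variable {V : Type*} {P : Type*} [NormedAddCommGroup V] [InnerProductSpace ℝ V]
  [MetricSpace P] [NormedAddTorsor V P]

lemma lawSinV (x y : V) :
    Real.sin (InnerProductGeometry.angle x y) * (‖x‖ * ‖y‖) =
      Real.sin (InnerProductGeometry.angle (-x) (y - x)) * (‖-x‖ * ‖y - x‖) := by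
  rw [InnerProductGeometry.sin_angle_mul_norm_mul_norm,
    InnerProductGeometry.sin_angle_mul_norm_mul_norm]
  congr 1
  simp only [inner_neg_neg, inner_neg_left, inner_neg_right, inner_sub_left, inner_sub_right,
    real_inner_comm y x]
  ring

lemma lawSinP (p q r : P) (hpq : p ≠ q) :
    Real.sin (∠ q p r) * dist p r = Real.sin (∠ p q r) * dist q r := by
  have h := lawSinV (q -ᵥ p) (r -ᵥ p)
  rw [neg_vsub_eq_vsub_rev, vsub_sub_vsub_cancel_right] at h
  have e1 : ‖q -ᵥ p‖ = dist p q := by rw [dist_comm]; exact (dist_eq_norm_vsub V q p).symm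
  have e2 : ‖p -ᵥ q‖ = dist p q := (dist_eq_norm_vsub V p q).symm
  have e3 : ‖r -ᵥ p‖ = dist p r := by rw [dist_comm]; exact (dist_eq_norm_vsub V r p).symm
  have e4 : ‖r -ᵥ q‖ = dist q r := by rw [dist_comm]; exact (dist_eq_norm_vsub V r q).symm
  rw [e1, e2, e3, e4] at h
  have hd : dist p q ≠ 0 := dist_ne_zero.2 hpq
  apply mul_left_cancel₀ hd
  show dist p q * (Real.sin (∠ q p r) * dist p r) = dist p q * (Real.sin (∠ p q r) * dist q r)
  unfold EuclideanGeometry.angle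
  linear_combination h

lemma angRay (x : P) {a : P} (y z : P) {r : ℝ} (hr : 0 < r) (h : y -ᵥ a = r • (z -ᵥ a)) :
    ∠ x a y = ∠ x a z := by
  unfold EuclideanGeometry.angle
  rw [h, InnerProductGeometry.angle_smul_right_of_pos _ _ hr]

lemma sinCases {f g : ℝ} (hf0 : 0 < f) (hfp : f < π) (hg0 : 0 < g) (hgp : g < π)
    (h : Real.sin f = Real.sin g) : f = g ∨ f + g = π := by
  have pi2 := Real.pi_pos
  rcases le_or_gt f (π / 2) with hf | hf <;> rcases le_or_gt g (π / 2) with hg | hg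
  · exact Or.inl (Real.injOn_sin ⟨by linarith, hf⟩ ⟨by linarith, hg⟩ h)
  · right
    have h' : Real.sin f = Real.sin (π - g) := by rw [Real.sin_pi_sub]; exact h
    have := Real.injOn_sin ⟨by linarith, hf⟩ ⟨by linarith, by linarith⟩ h'
    linarith
  · right
    have h' : Real.sin (π - f) = Real.sin g := by rw [Real.sin_pi_sub]; exact h
    have := Real.injOn_sin ⟨by linarith, by linarith⟩ ⟨by linarith, hg⟩ h'
    linarith
  · left
    have h' : Real.sin (π - f) = Real.sin (π - g) := by
      rw [Real.sin_pi_sub, Real.sin_pi_sub]; exact h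
    have := Real.injOn_sin ⟨by linarith, by linarith⟩ ⟨by linarith, by linarith⟩ h'
    linarith

lemma cevianEq (A B C A₁ B₁ : EuclideanSpace ℝ (Fin 2)) (s t : ℝ)
    (hA1e : AffineMap.lineMap B C t = A₁) (hB1e : AffineMap.lineMap A C s = B₁)
    (hdne : s - s * t + t ≠ 0) (hd0 : (0:ℝ) < s + t - s * t) :
    AffineMap.lineMap A A₁ (s / (s + t - s * t)) =
      AffineMap.lineMap B B₁ (t / (s + t - s * t)) := by
  rw [← hA1e, ← hB1e]
  simp only [AffineMap.lineMap_apply, vsub_eq_sub, vadd_eq_add]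
  match_scalars
  · field_simp
  · field_simp
    ring
  · field_simp
    ring

set_option maxHeartbeats 1000000 in
theorem stmt7 (A B C A₁ B₁ J : EuclideanSpace ℝ (Fin 2))
    (hABC : AffineIndependent ℝ ![A, B, C])
    (hA₁ : Sbtw ℝ B A₁ C) (hbisA : ∠ B A A₁ = ∠ C A A₁)
    (hB₁ : Sbtw ℝ A B₁ C) (hbisB : ∠ A B B₁ = ∠ C B B₁)
    (hJA : J ∈ affineSpan ℝ ({A, A₁} : Set (EuclideanSpace ℝ (Fin 2))))
    (hJB : J ∈ affineSpan ℝ ({B, B₁} : Set (EuclideanSpace ℝ (Fin 2))))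
    (hJ : dist J A₁ = dist J B₁) :
    dist C A = dist C B ∨ ∠ A C B = Real.pi / 3 := by
  have hncol : ¬Collinear ℝ ({A, B, C} : Set (EuclideanSpace ℝ (Fin 2))) :=
    affineIndependent_iff_not_collinear_set.1 hABC
  obtain ⟨⟨t, ht, hA1e⟩, -⟩ := sbtw_iff_mem_image_Ioo_and_ne.1 hA₁
  obtain ⟨⟨s, hs, hB1e⟩, -⟩ := sbtw_iff_mem_image_Ioo_and_ne.1 hB₁
  obtain ⟨ht0, ht1⟩ := ht
  obtain ⟨hs0, hs1⟩ := hs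
  -- basic distinctness
  have hAB : A ≠ B := by
    have := hABC.injective.ne (show (0 : Fin 3) ≠ 1 by decide); simpa using this
  have hAC : A ≠ C := by
    have := hABC.injective.ne (show (0 : Fin 3) ≠ 2 by decide); simpa using this
  have hBC : B ≠ C := by
    have := hABC.injective.ne (show (1 : Fin 3) ≠ 2 by decide); simpa using this
  have hAA₁ : A ≠ A₁ := by
    intro h
    exact hncol (collinear_insert_of_mem_affineSpan_pair (h ▸ hA₁.wbtw.mem_affineSpan))
  have hBB₁ : B ≠ B₁ := by
    intro h
    have : Collinear ℝ ({B, A, C} : Set (EuclideanSpace ℝ (Fin 2))) :=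
      collinear_insert_of_mem_affineSpan_pair (h ▸ hB₁.wbtw.mem_affineSpan)
    exact hncol (by rwa [Set.insert_comm] at this)
  -- vector facts for A₁, B₁
  have vA1B : A₁ -ᵥ B = t • (C -ᵥ B) := by
    rw [← hA1e]; simp [AffineMap.lineMap_apply, vsub_eq_sub, vadd_eq_add]
  have vA1C : A₁ -ᵥ C = (1 - t) • (B -ᵥ C) := by
    rw [← hA1e]; simp only [AffineMap.lineMap_apply, vsub_eq_sub, vadd_eq_add]; module
  have vB1A : B₁ -ᵥ A = s • (C -ᵥ A) := by
    rw [← hB1e]; simp [AffineMap.lineMap_apply, vsub_eq_sub, vadd_eq_add]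
  have vB1C : B₁ -ᵥ C = (1 - s) • (A -ᵥ C) := by
    rw [← hB1e]; simp only [AffineMap.lineMap_apply, vsub_eq_sub, vadd_eq_add]; module
  -- the cevian intersection point
  set d : ℝ := s + t - s * t with hdd
  have hd0 : 0 < d := by nlinarith
  set u : ℝ := s / d with hud
  set v : ℝ := t / d with hvd
  have hu0 : 0 < u := div_pos hs0 hd0
  have hu1 : u < 1 := by
    rw [hud, div_lt_one hd0]; nlinarith
  have hv0 : 0 < v := div_pos ht0 hd0
  have hv1 : v < 1 := by
    rw [hvd, div_lt_one hd0]; nlinarith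
  set Q : EuclideanSpace ℝ (Fin 2) := AffineMap.lineMap A A₁ u with hQ
  have hdne : s - s * t + t ≠ 0 := by nlinarith
  have hd0' : (0:ℝ) < s + t - s * t := by nlinarith
  have hQB : Q = AffineMap.lineMap B B₁ v := by
    rw [hQ, hud, hvd, hdd]
    exact cevianEq A B C A₁ B₁ s t hA1e hB1e hdne hd0'
  have hQlA : Q ∈ affineSpan ℝ ({A, A₁} : Set (EuclideanSpace ℝ (Fin 2))) :=
    AffineMap.lineMap_mem_affineSpan_pair u A A₁
  have hQlB : Q ∈ affineSpan ℝ ({B, B₁} : Set (EuclideanSpace ℝ (Fin 2))) := by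
    rw [hQB]; exact AffineMap.lineMap_mem_affineSpan_pair v B B₁
  -- J = Q
  have hJQ : J = Q := by
    by_contra hne
    have col1 : Collinear ℝ ({J, Q, A, A₁} : Set (EuclideanSpace ℝ (Fin 2))) :=
      collinear_insert_insert_of_mem_affineSpan_pair hJA hQlA
    have col2 : Collinear ℝ ({J, Q, B, B₁} : Set (EuclideanSpace ℝ (Fin 2))) :=
      collinear_insert_insert_of_mem_affineSpan_pair hJB hQlB
    have colA : A ∈ affineSpan ℝ ({J, Q} : Set (EuclideanSpace ℝ (Fin 2))) :=
      col1.mem_affineSpan_of_mem_of_ne (by simp) (by simp) (by simp) hne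
    have colB : B ∈ affineSpan ℝ ({J, Q} : Set (EuclideanSpace ℝ (Fin 2))) :=
      col2.mem_affineSpan_of_mem_of_ne (by simp) (by simp) (by simp) hne
    have colB₁ : B₁ ∈ affineSpan ℝ ({J, Q} : Set (EuclideanSpace ℝ (Fin 2))) :=
      col2.mem_affineSpan_of_mem_of_ne (by simp) (by simp) (by simp) hne
    have colABB₁ : Collinear ℝ ({A, B, B₁} : Set (EuclideanSpace ℝ (Fin 2))) :=
      (collinear_insert_insert_insert_of_mem_affineSpan_pair colA colB colB₁).subset
        (by intro x hx; simp at hx; rcases hx with h | h | h <;> simp [h])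
    have hCmem : C ∈ affineSpan ℝ ({A, B₁} : Set (EuclideanSpace ℝ (Fin 2))) := by
      have hC : C = AffineMap.lineMap A B₁ s⁻¹ := by
        rw [AffineMap.lineMap_apply, vB1A, smul_smul, inv_mul_cancel₀ (ne_of_gt hs0), one_smul]
        simp [vsub_eq_sub, vadd_eq_add]
      rw [hC]; exact AffineMap.lineMap_mem_affineSpan_pair _ A B₁
    have hBmem : B ∈ affineSpan ℝ ({A, B₁} : Set (EuclideanSpace ℝ (Fin 2))) :=
      colABB₁.mem_affineSpan_of_mem_of_ne (by simp) (by simp) (by simp) hB₁.ne_left.symm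
    have : Collinear ℝ ({B, C, A, B₁} : Set (EuclideanSpace ℝ (Fin 2))) :=
      collinear_insert_insert_of_mem_affineSpan_pair hBmem hCmem
    exact hncol (this.subset (by intro x hx; simp at hx; rcases hx with h | h | h <;> simp [h]))
  -- position of J on the two cevians
  have vJA : J -ᵥ A = u • (A₁ -ᵥ A) := by
    rw [hJQ, hQ]; simp only [AffineMap.lineMap_apply, vsub_eq_sub, vadd_eq_add]; module
  have vJB : J -ᵥ B = v • (B₁ -ᵥ B) := by
    rw [hJQ, hQB]; simp only [AffineMap.lineMap_apply, vsub_eq_sub, vadd_eq_add]; module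
  have vJA1 : J -ᵥ A₁ = (1 - u) • (A -ᵥ A₁) := by
    rw [hJQ, hQ]; simp only [AffineMap.lineMap_apply, vsub_eq_sub, vadd_eq_add]; module
  have vJB1 : J -ᵥ B₁ = (1 - v) • (B -ᵥ B₁) := by
    rw [hJQ, hQB]; simp only [AffineMap.lineMap_apply, vsub_eq_sub, vadd_eq_add]; module
  -- angles
  set α := ∠ B A C with hα'
  set β := ∠ A B C with hβ'
  set γ := ∠ A C B with hγ'
  set a := ∠ B A A₁ with ha'
  set b := ∠ A B B₁ with hb'
  set x := ∠ B A₁ A with hx'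
  set y := ∠ A B₁ B with hy'
  have S0 : α + β + γ = π := by
    have := angle_add_angle_add_angle_eq_pi (p₁ := C) B (show A ≠ C from hAC)
    rw [angle_comm C A B, angle_comm B C A] at this
    rw [hα', hβ', hγ']; linarith
  have S1 : β + x + a = π := by
    have h1 := angle_add_angle_add_angle_eq_pi (p₁ := A) A₁ (show B ≠ A from hAB.symm)
    rw [angRay A (a := B) A₁ C ht0 vA1B, angle_comm A₁ A B] at h1
    rw [hβ', hx', ha']; linarith
  have S2 : γ + (π - x) + a = π := by
    have h1 := angle_add_angle_add_angle_eq_pi (p₁ := A) A₁ (show C ≠ A from hAC.symm)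
    have h2 : ∠ A A₁ B + ∠ A A₁ C = π :=
      angle_add_angle_eq_pi_of_angle_eq_pi A hA₁.angle₁₂₃_eq_pi
    rw [angRay A (a := C) A₁ B (by linarith) vA1C, angle_comm A₁ A C, ← hbisA] at h1
    rw [angle_comm A A₁ B, angle_comm A A₁ C] at h2
    rw [hγ', hx']; linarith
  have S4 : α + y + b = π := by
    have h1 := angle_add_angle_add_angle_eq_pi (p₁ := B) B₁ (show A ≠ B from hAB)
    rw [angRay B (a := A) B₁ C hs0 vB1A, angle_comm B₁ B A] at h1
    rw [hα', hy', hb']; linarith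
  have S5 : γ + (π - y) + b = π := by
    have h1 := angle_add_angle_add_angle_eq_pi (p₁ := B) B₁ (show C ≠ B from hBC.symm)
    have h2 : ∠ B B₁ A + ∠ B B₁ C = π :=
      angle_add_angle_eq_pi_of_angle_eq_pi B hB₁.angle₁₂₃_eq_pi
    rw [angRay B (a := C) B₁ A (by linarith) vB1C, angle_comm B C A, angle_comm B₁ B C,
      ← hbisB] at h1
    rw [angle_comm B B₁ A, angle_comm B B₁ C] at h2
    rw [hγ', hy']; linarith
  have ha2 : 2 * a = α := by linarith
  have hb2 : 2 * b = β := by linarith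
  -- law of sines relations
  have L3 : Real.sin a * dist A J = Real.sin b * dist B J := by
    have h := lawSinP A B J hAB
    rw [angRay B (a := A) J A₁ hu0 vJA, angRay A (a := B) J B₁ hv0 vJB] at h
    rw [ha', hb']; exact h
  have L1 : Real.sin x * dist A₁ J = Real.sin b * dist B J := by
    have h := lawSinP A₁ B J hA₁.ne_left
    rw [angRay B (a := A₁) J A (by linarith) vJA1,
      angRay A₁ (a := B) J B₁ hv0 vJB, angle_comm A₁ B B₁,
      angRay B₁ (a := B) A₁ C ht0 vA1B, angle_comm B₁ B C, ← hbisB] at h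
    rw [hx']; exact h
  have L2 : Real.sin y * dist B₁ J = Real.sin a * dist A J := by
    have h := lawSinP B₁ A J hB₁.ne_left
    rw [angRay A (a := B₁) J B (by linarith) vJB1,
      angRay B₁ (a := A) J A₁ hu0 vJA, angle_comm B₁ A A₁,
      angRay A₁ (a := A) B₁ C hs0 vB1A, angle_comm A₁ A C, ← hbisA] at h
    rw [hy']; exact h
  -- sin x = sin y
  have hJd : dist A₁ J = dist B₁ J := by rw [dist_comm, hJ, dist_comm]
  have hJA₁ne : dist B₁ J ≠ 0 := by
    rw [← hJd, dist_comm, dist_ne_zero, ← vsub_ne_zero, vJA1]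
    exact smul_ne_zero (by linarith) (vsub_ne_zero.2 hAA₁)
  have hsxy : Real.sin x = Real.sin y := by
    apply mul_right_cancel₀ hJA₁ne
    rw [← hJd] at L2 ⊢
    linarith
  -- angle positivity
  have hα0 : 0 < α := angle_pos_of_not_collinear
    (fun h => hncol (by rwa [Set.insert_comm] at h))
  have hβ0 : 0 < β := angle_pos_of_not_collinear hncol
  have hγ0 : 0 < γ := angle_pos_of_not_collinear
    (fun h => hncol (by rwa [Set.pair_comm C B] at h))
  -- convert to sin (β + a) = sin (α + b)
  have hxv : x = π - (β + a) := by linarith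
  have hyv : y = π - (α + b) := by linarith
  rw [hxv, hyv, Real.sin_pi_sub, Real.sin_pi_sub] at hsxy
  have hcase := sinCases (by linarith) (by linarith) (by linarith) (by linarith) hsxy
  rcases hcase with h | h
  · left
    have hαβ : α = β := by linarith
    refine dist_eq_of_angle_eq_angle_of_angle_ne_pi ?_ ?_
    · rw [angle_comm C A B, angle_comm C B A, ← hα', ← hβ']; exact hαβ
    · exact angle_ne_pi_of_not_collinear (fun hc => hncol (by rwa [Set.pair_comm C B] at hc))
  · right
    linarith
end

section
/- Let MNPQ be a square inscribed in triangle ABC with M, N on side AB, P on BC, Q on CA, and let O be the center of the square. If ∠ACB = 90°, then ∠ACO = ∠BCO (CO bisects angle ACB). -/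
open EuclideanGeometry
open scoped RealInnerProductSpace
set_option maxHeartbeats 1000000

lemma stmt8aux (x y s μ : ℝ) (hx : 0 < x) (hy : 0 < y) (hs : 0 ≤ s) (hμ : 0 ≤ μ)
    (E1 : s * ((s - 1 + μ) * x ^ 2 + μ * y ^ 2) = 0)
    (E2 : s ^ 2 * (x ^ 2 + y ^ 2) = (s - 1 + μ) ^ 2 * x ^ 2 + μ ^ 2 * y ^ 2) :
    (1 - μ) * x = (μ + s) * y := by
  rcases eq_or_lt_of_le hs with h0 | hs'
  · subst h0
    have h1 : ((1 - μ) * x) ^ 2 = 0 := by nlinarith [sq_nonneg (μ * y)]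
    have h2 : (μ * y) ^ 2 = 0 := by nlinarith [sq_nonneg ((1 - μ) * x)]
    have h1' := sq_eq_zero_iff.mp h1
    have h2' := sq_eq_zero_iff.mp h2
    linarith
  · have E1' : (s - 1 + μ) * x ^ 2 + μ * y ^ 2 = 0 := by
      rcases mul_eq_zero.mp E1 with h | h
      · linarith
      · exact h
    have h3 : s ^ 2 * x ^ 2 = μ ^ 2 * y ^ 2 := by
      have h3' : s ^ 2 * x ^ 2 * (x ^ 2 + y ^ 2) = μ ^ 2 * y ^ 2 * (x ^ 2 + y ^ 2) := by
        linear_combination x ^ 2 * E2 + ((s - 1 + μ) * x ^ 2 - μ * y ^ 2) * E1'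
      have hpos : (0:ℝ) < x ^ 2 + y ^ 2 := by positivity
      exact mul_right_cancel₀ (ne_of_gt hpos) h3'
    have h4 : s * x = μ * y := by
      nlinarith [mul_pos hs' hx, mul_nonneg hμ hy.le]
    have h5 : (1 - μ) * x * x = (μ + s) * y * x := by
      linear_combination (-1 : ℝ) * E1' + (x - y) * h4
    exact mul_right_cancel₀ (ne_of_gt hx) h5

theorem stmt8 (A B C M N P Q O : EuclideanSpace ℝ (Fin 2))
    (hABC : AffineIndependent ℝ ![A, B, C])
    (hM : M ∈ segment ℝ A B) (hN : N ∈ segment ℝ A B)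
    (hP : P ∈ segment ℝ B C) (hQ : Q ∈ segment ℝ C A)
    (hs1 : dist M N = dist N P) (hs2 : dist N P = dist P Q)
    (hs3 : dist P Q = dist Q M)
    (ha1 : ∠ Q M N = Real.pi / 2) (ha2 : ∠ M N P = Real.pi / 2)
    (ha3 : ∠ N P Q = Real.pi / 2)
    (hO1 : O = midpoint ℝ M P) (hO2 : O = midpoint ℝ N Q)
    (hC : ∠ A C B = Real.pi / 2) :
    ∠ A C O = ∠ B C O := by
  obtain ⟨p, μ, hp0, hμ0, hpμ, hMe⟩ := hM
  obtain ⟨pn, ν, hpn0, hν0, hpν, hNe⟩ := hN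
  obtain ⟨t, pt, ht0, hpt0, htp, hPe⟩ := hP
  obtain ⟨pq, s, hpq0, hs0, hqs, hQe⟩ := hQ
  set a : EuclideanSpace ℝ (Fin 2) := A - C with hadef
  set b : EuclideanSpace ℝ (Fin 2) := B - C with hbdef
  have hAC : A ≠ C := by simpa using hABC.injective.ne (show (0:Fin 3) ≠ 2 by decide)
  have hBC : B ≠ C := by simpa using hABC.injective.ne (show (1:Fin 3) ≠ 2 by decide)
  have hx : 0 < ‖a‖ := by rw [norm_pos_iff]; exact sub_ne_zero.mpr hAC
  have hy : 0 < ‖b‖ := by rw [norm_pos_iff]; exact sub_ne_zero.mpr hBC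
  have hab : ⟪a, b⟫ = 0 := by
    have := InnerProductGeometry.inner_eq_zero_iff_angle_eq_pi_div_two (A -ᵥ C) (B -ᵥ C) |>.mpr hC
    simpa using this
  have hba : ⟪b, a⟫ = 0 := by rw [real_inner_comm]; exact hab
  -- vector representations
  have V1 : M - C = (1 - μ) • a + μ • b := by
    rw [← hMe, show p = 1 - μ from by linarith, hadef, hbdef]; module
  have V2 : N - C = (1 - ν) • a + ν • b := by
    rw [← hNe, show pn = 1 - ν from by linarith, hadef, hbdef]; module
  have V3 : Q - C = s • a := by
    rw [← hQe, show pq = 1 - s from by linarith, hadef]; module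
  have V4 : P - C = t • b := by
    rw [← hPe, show pt = 1 - t from by linarith, hbdef]; module
  -- midpoint equation
  have hMPv : M - N = Q - P := by
    have := (midpoint_eq_midpoint_iff_vsub_eq_vsub ℝ).mp (hO1.symm.trans hO2)
    simpa using this
  have NM' : N - M = t • b - s • a := by
    rw [← V4, ← V3]
    linear_combination (norm := module) -hMPv
  -- t = s from N on AB
  have h7 : ((1 - ν) • a + ν • b) - ((1 - μ) • a + μ • b) = t • b - s • a := by
    rw [← V1, ← V2, ← NM']; module
  have h8 := congrArg (fun z => ⟪a, z⟫) h7
  have h9 := congrArg (fun z => ⟪b, z⟫) h7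
  simp only [inner_sub_right, inner_add_right, real_inner_smul_right, hab, hba,
    real_inner_self_eq_norm_sq, mul_zero, add_zero, zero_add, sub_zero, zero_sub] at h8 h9
  have hνμ : μ - ν + s = 0 := by
    have h8' : (μ - ν + s) * ‖a‖ ^ 2 = 0 := by linear_combination h8
    rcases mul_eq_zero.mp h8' with h | h
    · exact h
    · exact absurd h (by positivity)
  have hts : t = s := by
    have h9' : (t - ν + μ) * ‖b‖ ^ 2 = 0 := by linear_combination -h9
    rcases mul_eq_zero.mp h9' with h | h
    · linarith
    · exact absurd h (by positivity)
  rw [hts] at NM' V4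
  have NM : N - M = s • b - s • a := NM'
  have QM : Q - M = (s - 1 + μ) • a - μ • b := by
    linear_combination (norm := module) V3 - V1
  -- right angle at M of the square
  have e1 : ⟪Q - M, N - M⟫ = 0 := by
    have := InnerProductGeometry.inner_eq_zero_iff_angle_eq_pi_div_two (Q -ᵥ M) (N -ᵥ M) |>.mpr ha1
    simpa using this
  rw [QM, NM] at e1
  have E1 : s * ((s - 1 + μ) * ‖a‖ ^ 2 + μ * ‖b‖ ^ 2) = 0 := by
    simp only [inner_sub_left, inner_sub_right, real_inner_smul_left, real_inner_smul_right,
      hab, hba, mul_zero, add_zero, zero_add, sub_zero, zero_sub] at e1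
    simp only [real_inner_self_eq_norm_sq] at e1
    linear_combination -e1
  -- equal sides
  have hside : ‖N - M‖ = ‖Q - M‖ := by
    have h := hs1.trans (hs2.trans hs3)
    rw [dist_eq_norm, dist_eq_norm] at h
    rw [norm_sub_rev, h, norm_sub_rev]
  have e2 : ⟪N - M, N - M⟫ = ⟪Q - M, Q - M⟫ := by
    rw [real_inner_self_eq_norm_sq, real_inner_self_eq_norm_sq, hside]
  rw [QM, NM] at e2
  have E2 : s ^ 2 * (‖a‖ ^ 2 + ‖b‖ ^ 2) = (s - 1 + μ) ^ 2 * ‖a‖ ^ 2 + μ ^ 2 * ‖b‖ ^ 2 := by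
    simp only [inner_sub_left, inner_sub_right, real_inner_smul_left, real_inner_smul_right,
      hab, hba, mul_zero, add_zero, zero_add, sub_zero, zero_sub] at e2
    simp only [real_inner_self_eq_norm_sq] at e2
    linear_combination e2
  have key : (1 - μ) * ‖a‖ = (μ + s) * ‖b‖ := stmt8aux _ _ _ _ hx hy hs0 hμ0 E1 E2
  -- center of square
  have VO : O - C = ((1 - μ) / 2) • a + ((μ + s) / 2) • b := by
    rw [hO1, midpoint_eq_smul_add, invOf_eq_inv, show ((2:ℝ))⁻¹ = 1/2 from by norm_num]
    linear_combination (norm := module) ((1:ℝ)/2) • V1 + ((1:ℝ)/2) • V4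
  have iaO : ⟪a, O - C⟫ = (1 - μ) / 2 * ‖a‖ ^ 2 := by
    rw [VO]
    simp only [inner_add_right, real_inner_smul_right, hab, real_inner_self_eq_norm_sq, mul_zero, add_zero]
  have ibO : ⟪b, O - C⟫ = (μ + s) / 2 * ‖b‖ ^ 2 := by
    rw [VO]
    simp only [inner_add_right, real_inner_smul_right, hba, real_inner_self_eq_norm_sq, mul_zero, zero_add]
  -- final
  unfold EuclideanGeometry.angle InnerProductGeometry.angle
  rw [vsub_eq_sub, vsub_eq_sub, vsub_eq_sub, ← hadef, ← hbdef]
  rw [iaO, ibO, ← div_div, ← div_div]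
  congr 2
  rw [div_eq_div_iff (ne_of_gt hx) (ne_of_gt hy)]
  linear_combination (‖a‖ * ‖b‖ / 2) * key
end

section
/- Let MNPQ be a square inscribed in triangle ABC with M, N on side AB, P on BC, Q on CA, and let O be its center. If ∠ACO = ∠BCO, then CA = CB or ∠ACB = 90°. -/
open EuclideanGeometry
open scoped RealInnerProductSpace

private lemma inner2' (x y : EuclideanSpace ℝ (Fin 2)) : ⟪x, y⟫ = x 0 * y 0 + x 1 * y 1 := by
  simp [PiLp.inner_apply, Fin.sum_univ_two]
  ring

private lemma subap (x y : EuclideanSpace ℝ (Fin 2)) (i : Fin 2) : (x - y) i = x i - y i := by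
  simp

private lemma dist2 (x y : EuclideanSpace ℝ (Fin 2)) :
    dist x y ^ 2 = (x 0 - y 0)^2 + (x 1 - y 1)^2 := by
  rw [dist_eq_norm_sub, ← real_inner_self_eq_norm_sq, inner2']
  simp [subap]
  ring

private lemma sq_eq' (a b : ℝ) (ha : 0 ≤ a) (hb : 0 ≤ b) (h : a^2 = b^2) : a = b :=
  le_antisymm (by nlinarith) (by nlinarith)

private lemma sbtw_coords {X Y Z : EuclideanSpace ℝ (Fin 2)} (h : Sbtw ℝ X Y Z) :
    ∃ t : ℝ, 0 < t ∧ t < 1 ∧ Y 0 = X 0 + t * (Z 0 - X 0) ∧ Y 1 = X 1 + t * (Z 1 - X 1) := by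
  obtain ⟨t, ht, hY⟩ := h.mem_image_Ioo
  refine ⟨t, ht.1, ht.2, ?_, ?_⟩ <;>
  · rw [← hY]
    simp [AffineMap.lineMap_apply_module]
    ring

private lemma span2 (d0 d1 k0 k1 z0 z1 : ℝ) (hspos : 0 < d0^2 + d1^2)
    (horth : k0*d0 + k1*d1 = 0) (hknorm : k0^2+k1^2 = d0^2+d1^2) :
    ∃ p q : ℝ, z0 = p*d0 + q*k0 ∧ z1 = p*d1 + q*k1 := by
  have hdet2 : (d0*k1 - d1*k0)^2 = (d0^2+d1^2)^2 := by
    linear_combination (d0^2+d1^2)*hknorm - (k0*d0+k1*d1)*horth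
  have hdet : d0*k1 - d1*k0 ≠ 0 := by
    intro h
    rw [h] at hdet2
    nlinarith
  have hsne : d0^2+d1^2 ≠ 0 := ne_of_gt hspos
  refine ⟨(z0*d0+z1*d1)/(d0^2+d1^2), (z0*k0+z1*k1)/(d0^2+d1^2), ?_, ?_⟩
  · have h1 : (z0*(d0^2+d1^2) - ((z0*d0+z1*d1)*d0 + (z0*k0+z1*k1)*k0)) * (d0*k1-d1*k0) = 0 := by
      linear_combination (d1*(z0*k0+z1*k1))*hknorm +
        (d1*(z0*d0+z1*d1) - k1*(z0*k0+z1*k1))*horth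
    have h2 := (mul_eq_zero.mp h1).resolve_right hdet
    field_simp
    linarith [h2]
  · have h1 : (z1*(d0^2+d1^2) - ((z0*d0+z1*d1)*d1 + (z0*k0+z1*k1)*k1)) * (d0*k1-d1*k0) = 0 := by
      linear_combination (-d0*(z0*k0+z1*k1))*hknorm +
        (k0*(z0*k0+z1*k1) - d0*(z0*d0+z1*d1))*horth
    have h2 := (mul_eq_zero.mp h1).resolve_right hdet
    field_simp
    linarith [h2]

private lemma dotlemma (d0 d1 k0 k1 x1 y1 x2 y2 : ℝ)
    (horth : k0*d0 + k1*d1 = 0) (hknorm : k0^2+k1^2 = d0^2+d1^2) :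
    (x1*d0+y1*k0)*(x2*d0+y2*k0) + (x1*d1+y1*k1)*(x2*d1+y2*k1)
      = (x1*x2+y1*y2)*(d0^2+d1^2) := by
  linear_combination (x1*y2+x2*y1)*horth + y1*y2*hknorm

private lemma normlemma (d0 d1 k0 k1 x1 y1 : ℝ)
    (horth : k0*d0 + k1*d1 = 0) (hknorm : k0^2+k1^2 = d0^2+d1^2) :
    (x1*d0+y1*k0)^2 + (x1*d1+y1*k1)^2 = (x1^2+y1^2)*(d0^2+d1^2) := by
  linear_combination (2*x1*y1)*horth + y1^2*hknorm

set_option maxHeartbeats 2000000 in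
private lemma key (a0 a1 b0 b1 c0 c1 m0 m1 n0 n1 p0 p1 q0 q1 o0 o1 t1 t2 t3 t4 : ℝ)
    (ht3 : 0 < t3) (ht3' : t3 < 1) (ht4 : 0 < t4) (ht4' : t4 < 1)
    (hM0 : m0 = a0 + t1*(b0-a0)) (hM1 : m1 = a1 + t1*(b1-a1))
    (hN0 : n0 = a0 + t2*(b0-a0)) (hN1 : n1 = a1 + t2*(b1-a1))
    (hP0 : p0 = b0 + t3*(c0-b0)) (hP1 : p1 = b1 + t3*(c1-b1))
    (hQ0 : q0 = c0 + t4*(a0-c0)) (hQ1 : q1 = c1 + t4*(a1-c1))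
    (horth : (q0-m0)*(n0-m0) + (q1-m1)*(n1-m1) = 0)
    (hknorm : (q0-m0)^2 + (q1-m1)^2 = (n0-m0)^2 + (n1-m1)^2)
    (hmid0 : m0 + p0 = n0 + q0) (hmid1 : m1 + p1 = n1 + q1)
    (hO0 : 2*o0 = m0 + p0) (hO1 : 2*o1 = m1 + p1)
    (hMN : ¬ (n0 - m0 = 0 ∧ n1 - m1 = 0))
    (hX : ((a0-c0)*(o0-c0) + (a1-c1)*(o1-c1))^2 * ((b0-c0)^2 + (b1-c1)^2)
        = ((b0-c0)*(o0-c0) + (b1-c1)*(o1-c1))^2 * ((a0-c0)^2 + (a1-c1)^2))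
    (hD : (a0-c0)^2+(a1-c1)^2 ≠ (b0-c0)^2+(b1-c1)^2)
    (hUV : (a0-c0)*(b0-c0) + (a1-c1)*(b1-c1) ≠ 0) : False := by
  set d0 := n0 - m0 with hd0
  set d1 := n1 - m1 with hd1
  set k0 := q0 - m0 with hk0
  set k1 := q1 - m1 with hk1
  have hs_pos : 0 < d0^2 + d1^2 := by
    rcases not_and_or.mp hMN with h | h
    · have h0 : 0 < d0^2 := lt_of_le_of_ne (sq_nonneg _) (Ne.symm (pow_ne_zero 2 h))
      exact add_pos_of_pos_of_nonneg h0 (sq_nonneg d1)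
    · have h0 : 0 < d1^2 := lt_of_le_of_ne (sq_nonneg _) (Ne.symm (pow_ne_zero 2 h))
      exact add_pos_of_nonneg_of_pos (sq_nonneg d0) h0
  have ht12 : t2 - t1 ≠ 0 := by
    intro h
    apply hMN
    constructor
    · linear_combination hd0 + hN0 - hM0 + (b0-a0)*h
    · linear_combination hd1 + hN1 - hM1 + (b1-a1)*h
  set α := -t1/(t2-t1) with hαd
  set β := (1-t1)/(t2-t1) with hβd
  have hA0 : a0 - m0 = α*d0 := by
    rw [hαd, div_mul_eq_mul_div, eq_div_iff ht12]
    linear_combination (-t2)*hM0 + t1*hN0 + t1*hd0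
  have hA1 : a1 - m1 = α*d1 := by
    rw [hαd, div_mul_eq_mul_div, eq_div_iff ht12]
    linear_combination (-t2)*hM1 + t1*hN1 + t1*hd1
  have hB0 : b0 - m0 = β*d0 := by
    rw [hβd, div_mul_eq_mul_div, eq_div_iff ht12]
    linear_combination (1-t2)*hM0 + (t1-1)*hN0 + (t1-1)*hd0
  have hB1 : b1 - m1 = β*d1 := by
    rw [hβd, div_mul_eq_mul_div, eq_div_iff ht12]
    linear_combination (1-t2)*hM1 + (t1-1)*hN1 + (t1-1)*hd1
  obtain ⟨p, q, hz0, hz1⟩ := span2 d0 d1 k0 k1 (c0-m0) (c1-m1) hs_pos horth hknorm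
  -- determinant
  have hdet2 : (d0*k1 - d1*k0)^2 = (d0^2+d1^2)^2 := by
    linear_combination (d0^2+d1^2)*hknorm - (k0*d0+k1*d1)*horth
  have hdet : d0*k1 - d1*k0 ≠ 0 := by
    intro h; rw [h] at hdet2
    linarith only [hdet2, pow_pos hs_pos 2]
  -- Q equations
  have hk0e : k0 = (p*d0+q*k0) + t4*(α*d0 - (p*d0+q*k0)) := by
    linear_combination hk0 + hQ0 + (1-t4)*hz0 + t4*hA0
  have hk1e : k1 = (p*d1+q*k1) + t4*(α*d1 - (p*d1+q*k1)) := by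
    linear_combination hk1 + hQ1 + (1-t4)*hz1 + t4*hA1
  have g0 : (p + t4*(α-p))*d0 + (q*(1-t4) - 1)*k0 = 0 := by linear_combination -hk0e
  have g1 : (p + t4*(α-p))*d1 + (q*(1-t4) - 1)*k1 = 0 := by linear_combination -hk1e
  have E1 : p + t4*(α-p) = 0 := by
    have h : (p + t4*(α-p))*(d0*k1-d1*k0) = 0 := by linear_combination k1*g0 - k0*g1
    exact (mul_eq_zero.mp h).resolve_right hdet
  have E2 : q*(1-t4) = 1 := by
    have h : (q*(1-t4) - 1)*(d0*k1-d1*k0) = 0 := by linear_combination d0*g1 - d1*g0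
    have h2 := (mul_eq_zero.mp h).resolve_right hdet
    linarith only [h2]
  -- P equations
  have hPm0 : p0 - m0 = d0 + k0 := by linear_combination hmid0 - hd0 - hk0
  have hPm1 : p1 - m1 = d1 + k1 := by linear_combination hmid1 - hd1 - hk1
  have hp0e : d0 + k0 = β*d0 + t3*((p*d0+q*k0) - β*d0) := by
    linear_combination -hPm0 + hP0 + (1-t3)*hB0 + t3*hz0
  have hp1e : d1 + k1 = β*d1 + t3*((p*d1+q*k1) - β*d1) := by
    linear_combination -hPm1 + hP1 + (1-t3)*hB1 + t3*hz1
  have g0' : (β + t3*(p-β) - 1)*d0 + (t3*q - 1)*k0 = 0 := by linear_combination -hp0e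
  have g1' : (β + t3*(p-β) - 1)*d1 + (t3*q - 1)*k1 = 0 := by linear_combination -hp1e
  have E3 : β + t3*(p-β) = 1 := by
    have h : (β + t3*(p-β) - 1)*(d0*k1-d1*k0) = 0 := by linear_combination k1*g0' - k0*g1'
    have h2 := (mul_eq_zero.mp h).resolve_right hdet
    linarith only [h2]
  have E4 : t3*q = 1 := by
    have h : (t3*q - 1)*(d0*k1-d1*k0) = 0 := by linear_combination d0*g1' - d1*g0'
    have h2 := (mul_eq_zero.mp h).resolve_right hdet
    linarith only [h2]
  -- q > 1
  have hq0 : 0 < q := by nlinarith only [E2, ht4']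
  have hq1 : 1 < q := by nlinarith only [E2, mul_pos hq0 ht4]
  have hq1' : q - 1 ≠ 0 := ne_of_gt (by linarith)
  have hα' : α*(q-1) = -p := by linear_combination q*E1 + (α-p)*E2
  have hβ' : β*(q-1) = q - p := by linear_combination q*E3 - (p-β)*E4
  -- components of u, v, w
  have hu0 : a0 - c0 = (α-p)*d0 + (-q)*k0 := by linear_combination hA0 - hz0
  have hu1 : a1 - c1 = (α-p)*d1 + (-q)*k1 := by linear_combination hA1 - hz1
  have hv0 : b0 - c0 = (β-p)*d0 + (-q)*k0 := by linear_combination hB0 - hz0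
  have hv1 : b1 - c1 = (β-p)*d1 + (-q)*k1 := by linear_combination hB1 - hz1
  have hw0 : o0 - c0 = (1/2-p)*d0 + (1/2-q)*k0 := by
    linear_combination (1/2)*hO0 + (1/2)*hPm0 - hz0
  have hw1 : o1 - c1 = (1/2-p)*d1 + (1/2-q)*k1 := by
    linear_combination (1/2)*hO1 + (1/2)*hPm1 - hz1
  rw [hu0, hu1, hv0, hv1, hw0, hw1] at hX
  rw [hu0, hu1, hv0, hv1] at hD hUV
  rw [dotlemma d0 d1 k0 k1 (α-p) (-q) (1/2-p) (1/2-q) horth hknorm,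
      dotlemma d0 d1 k0 k1 (β-p) (-q) (1/2-p) (1/2-q) horth hknorm,
      normlemma d0 d1 k0 k1 (α-p) (-q) horth hknorm,
      normlemma d0 d1 k0 k1 (β-p) (-q) horth hknorm] at hX
  rw [normlemma d0 d1 k0 k1 (α-p) (-q) horth hknorm,
      normlemma d0 d1 k0 k1 (β-p) (-q) horth hknorm] at hD
  rw [dotlemma d0 d1 k0 k1 (α-p) (-q) (β-p) (-q) horth hknorm] at hUV
  have hsne3 : (d0^2+d1^2)^3 ≠ 0 := by positivity
  obtain ⟨Sa, hSa⟩ : ∃ x : ℝ, x = (α-p)*(1/2-p)+(-q)*(1/2-q) := ⟨_, rfl⟩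
  obtain ⟨Sb, hSb⟩ : ∃ x : ℝ, x = (β-p)*(1/2-p)+(-q)*(1/2-q) := ⟨_, rfl⟩
  obtain ⟨Ta, hTa⟩ : ∃ x : ℝ, x = (α-p)^2+(-q)^2 := ⟨_, rfl⟩
  obtain ⟨Tb, hTb⟩ : ∃ x : ℝ, x = (β-p)^2+(-q)^2 := ⟨_, rfl⟩
  rw [← hSa, ← hSb, ← hTa, ← hTb] at hX
  have hXX0 : Sa^2*Tb = Sb^2*Ta := by
    have h0 : (Sa^2*Tb - Sb^2*Ta) * (d0^2+d1^2)^3 = 0 := by linear_combination hX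
    have h2 := (mul_eq_zero.mp h0).resolve_right hsne3
    linarith only [h2]
  rw [hSa, hSb, hTa, hTb] at hXX0
  have hXX : ((α-p)*(1/2-p)+(-q)*(1/2-q))^2 * ((β-p)^2+(-q)^2)
      = ((β-p)*(1/2-p)+(-q)*(1/2-q))^2 * ((α-p)^2+(-q)^2) := hXX0
  have hDD : ((α-p)^2+(-q)^2) ≠ ((β-p)^2+(-q)^2) := by
    intro h; exact hD (by rw [h])
  have hUV' : (α-p)*(β-p)+(-q)*(-q) ≠ 0 := by
    intro h
    apply hUV
    rw [h, zero_mul]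
  -- eliminate α β
  have ha1 : α - p = -(p*q)/(q-1) := by
    rw [eq_div_iff hq1']
    linear_combination hα'
  have hb1 : β - p = q*(1-p)/(q-1) := by
    rw [eq_div_iff hq1']
    linear_combination hβ'
  rw [ha1, hb1] at hXX hDD hUV'
  have hp : 2*p - 1 ≠ 0 := by
    intro h
    apply hDD
    have hp' : p = 1/2 := by linarith only [h]
    rw [hp']
    ring
  have huv2 : (q-1)^2 - (p - p^2) ≠ 0 := by
    intro h
    apply hUV'
    field_simp
    linear_combination q^2*h
  have hfin : 2*(1-q)*q^4*((2*p-1)*((q-1)^2-(p-p^2))) = 0 := by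
    have hc : 2*(1-q)*q^4*((2*p-1)*((q-1)^2-(p-p^2)))
        = 4*(q-1)^4*((-(p*q)/(q-1)*(1/2-p)+(-q)*(1/2-q))^2 * ((q*(1-p)/(q-1))^2+(-q)^2)
          - ((q*(1-p)/(q-1))*(1/2-p)+(-q)*(1/2-q))^2 * ((-(p*q)/(q-1))^2+(-q)^2)) := by
      field_simp
      ring
    rw [hc]
    linear_combination 4*(q-1)^4*hXX
  have hc1 : 2*(1-q)*q^4 ≠ 0 := by
    have : 2*(1-q)*q^4 < 0 := by nlinarith only [hq1, pow_pos hq0 4]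
    exact ne_of_lt this
  rcases mul_eq_zero.mp hfin with h | h
  · exact hc1 h
  · rcases mul_eq_zero.mp h with h' | h'
    · exact hp h'
    · exact huv2 h'


theorem stmt10 (A B C M N P Q O : EuclideanSpace ℝ (Fin 2))
    (hABC : AffineIndependent ℝ ![A, B, C])
    (hM : Sbtw ℝ A M B) (hN : Sbtw ℝ A N B)
    (hP : Sbtw ℝ B P C) (hQ : Sbtw ℝ C Q A)
    (hs1 : dist M N = dist N P) (hs2 : dist N P = dist P Q)
    (hs3 : dist P Q = dist Q M)
    (ha1 : ∠ Q M N = Real.pi / 2) (ha2 : ∠ M N P = Real.pi / 2)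
    (ha3 : ∠ N P Q = Real.pi / 2)
    (hO1 : O = midpoint ℝ M P) (hO2 : O = midpoint ℝ N Q)
    (hOC : O ≠ C)
    (hbis : ∠ A C O = ∠ B C O) :
    dist C A = dist C B ∨ ∠ A C B = Real.pi / 2 := by
  by_contra hcon
  push_neg at hcon
  obtain ⟨hne, hang⟩ := hcon
  have hMP : M + P = N + Q := by
    rw [← midpoint_add_self ℝ M P, ← midpoint_add_self ℝ N Q, ← hO1, ← hO2]
  by_cases hMN : M = N
  · have hPQ : P = Q := by
      have h := hMP
      rw [hMN] at h
      exact add_left_cancel h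
    have hQC : Q ≠ C := hQ.2.1
    have hcol2 : Collinear ℝ ({C, Q, A} : Set (EuclideanSpace ℝ (Fin 2))) := hQ.wbtw.collinear
    have h3 : Collinear ℝ (insert B ({C, Q, A} : Set (EuclideanSpace ℝ (Fin 2)))) := by
      rw [hcol2.collinear_insert_iff_of_ne (p₁ := B)
        (Set.mem_insert_of_mem _ (Set.mem_insert _ _)) (Set.mem_insert _ _) hQC]
      rw [← hPQ]
      exact hP.wbtw.collinear
    have h4 : Collinear ℝ ({A, B, C} : Set (EuclideanSpace ℝ (Fin 2))) :=
      h3.subset (by intro x hx; simp at hx ⊢; tauto)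
    exact (affineIndependent_iff_not_collinear_set.mp hABC) h4
  · obtain ⟨t1, ht1, ht1', hM0, hM1⟩ := sbtw_coords hM
    obtain ⟨t2, ht2, ht2', hN0, hN1⟩ := sbtw_coords hN
    obtain ⟨t3, ht3, ht3', hP0, hP1⟩ := sbtw_coords hP
    obtain ⟨t4, ht4, ht4', hQ0, hQ1⟩ := sbtw_coords hQ
    have horth : (Q 0 - M 0)*(N 0 - M 0) + (Q 1 - M 1)*(N 1 - M 1) = 0 := by
      have h : ⟪Q - M, N - M⟫ = 0 := by
        rw [EuclideanGeometry.angle] at ha1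
        exact (InnerProductGeometry.inner_eq_zero_iff_angle_eq_pi_div_two _ _).2 ha1
      rw [inner2'] at h
      simpa [subap] using h
    have hQM : dist Q M ^ 2 = dist M N ^ 2 := by rw [← hs3, ← hs2, ← hs1]
    rw [dist2, dist2] at hQM
    have hmid0 : M 0 + P 0 = N 0 + Q 0 := by
      have h0 : (M + P) 0 = (N + Q) 0 := by rw [hMP]
      simpa using h0
    have hmid1 : M 1 + P 1 = N 1 + Q 1 := by
      have h0 : (M + P) 1 = (N + Q) 1 := by rw [hMP]
      simpa using h0
    have hOO : O + O = M + P := by rw [hO1]; exact midpoint_add_self ℝ M P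
    have hO0' : 2*(O 0) = M 0 + P 0 := by
      have h0 : (O + O) 0 = (M + P) 0 := by rw [hOO]
      simp at h0
      linarith
    have hO1' : 2*(O 1) = M 1 + P 1 := by
      have h0 : (O + O) 1 = (M + P) 1 := by rw [hOO]
      simp at h0
      linarith
    have hCA : A ≠ C := (hQ.left_ne_right).symm
    have hCB : B ≠ C := hP.left_ne_right
    have hun : ‖A - C‖ ≠ 0 := norm_ne_zero_iff.mpr (sub_ne_zero_of_ne hCA)
    have hvn : ‖B - C‖ ≠ 0 := norm_ne_zero_iff.mpr (sub_ne_zero_of_ne hCB)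
    have hwn : ‖O - C‖ ≠ 0 := norm_ne_zero_iff.mpr (sub_ne_zero_of_ne hOC)
    have hbis' : InnerProductGeometry.angle (A - C) (O - C)
        = InnerProductGeometry.angle (B - C) (O - C) := hbis
    have hcos := congrArg Real.cos hbis'
    rw [InnerProductGeometry.cos_angle, InnerProductGeometry.cos_angle] at hcos
    have h1 : ⟪A-C, O-C⟫ * (‖B-C‖ * ‖O-C‖) = ⟪B-C, O-C⟫ * (‖A-C‖ * ‖O-C‖) :=
      (div_eq_div_iff (mul_ne_zero hun hwn) (mul_ne_zero hvn hwn)).mp hcos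
    have h2 : ⟪A-C,O-C⟫ * ‖B-C‖ = ⟪B-C,O-C⟫ * ‖A-C‖ :=
      mul_right_cancel₀ hwn (by linear_combination h1)
    have hXsq : ⟪A-C,O-C⟫^2 * ⟪B-C,B-C⟫ = ⟪B-C,O-C⟫^2 * ⟪A-C,A-C⟫ := by
      rw [real_inner_self_eq_norm_sq, real_inner_self_eq_norm_sq]
      linear_combination (⟪A-C,O-C⟫*‖B-C‖ + ⟪B-C,O-C⟫*‖A-C‖) * h2
    rw [inner2', inner2', inner2', inner2'] at hXsq
    simp only [subap] at hXsq
    have hDne : (A 0 - C 0)^2+(A 1 - C 1)^2 ≠ (B 0 - C 0)^2+(B 1 - C 1)^2 := by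
      intro h
      apply hne
      have hsq : dist C A ^2 = dist C B ^2 := by rw [dist2, dist2]; linear_combination h
      exact sq_eq' _ _ dist_nonneg dist_nonneg hsq
    have hUVne : (A 0 - C 0)*(B 0 - C 0) + (A 1 - C 1)*(B 1 - C 1) ≠ 0 := by
      intro h
      apply hang
      rw [EuclideanGeometry.angle]
      apply (InnerProductGeometry.inner_eq_zero_iff_angle_eq_pi_div_two _ _).1
      rw [inner2']
      simpa [subap] using h
    have hMN' : ¬ (N 0 - M 0 = 0 ∧ N 1 - M 1 = 0) := by
      rintro ⟨h0, h1⟩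
      apply hMN
      ext i
      fin_cases i
      · simpa using (by linarith : M 0 = N 0)
      · simpa using (by linarith : M 1 = N 1)
    exact key (A 0) (A 1) (B 0) (B 1) (C 0) (C 1) (M 0) (M 1) (N 0) (N 1) (P 0) (P 1)
      (Q 0) (Q 1) (O 0) (O 1) t1 t2 t3 t4 ht3 ht3' ht4 ht4'
      hM0 hM1 hN0 hN1 hP0 hP1 hQ0 hQ1 horth (by linear_combination hQM)
      hmid0 hmid1 hO0' hO1' hMN' (by linear_combination hXsq) hDne hUVne
end

section
/- In triangle ABC, let AA₁ and BB₁ be the internal bisectors of angles CAB and CBA (A₁ on BC, B₁ on AC). If ∠BAC = 120°, then ∠BB₁A₁ = 30°. -/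
open EuclideanGeometry RealInnerProductSpace

set_option maxHeartbeats 8000000 in
theorem stmt12 (A B C A₁ B₁ : EuclideanSpace ℝ (Fin 2))
    (hABC : AffineIndependent ℝ ![A, B, C])
    (hA₁ : Sbtw ℝ B A₁ C) (hbisA : ∠ B A A₁ = ∠ C A A₁)
    (hB₁ : Sbtw ℝ A B₁ C) (hbisB : ∠ A B B₁ = ∠ C B B₁)
    (hA : ∠ B A C = 2 * Real.pi / 3) :
    ∠ B B₁ A₁ = Real.pi / 6 := by
  have hnc : ¬ Collinear ℝ ({A, B, C} : Set (EuclideanSpace ℝ (Fin 2))) :=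
    affineIndependent_iff_not_collinear_set.mp hABC
  have hinj := hABC.injective
  have hAB : A ≠ B := fun h => (by decide : (0:Fin 3) ≠ 1) (hinj (by simpa using h))
  have hAC : A ≠ C := fun h => (by decide : (0:Fin 3) ≠ 2) (hinj (by simpa using h))
  have hBC : B ≠ C := fun h => (by decide : (1:Fin 3) ≠ 2) (hinj (by simpa using h))
  set u : EuclideanSpace ℝ (Fin 2) := B - A with hu
  set v : EuclideanSpace ℝ (Fin 2) := C - A with hv
  set b : ℝ := dist A C with hbdef
  set c : ℝ := dist A B with hcdef
  set a : ℝ := dist B C with hadef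
  have hb : 0 < b := dist_pos.2 hAC
  have hc : 0 < c := dist_pos.2 hAB
  have ha : 0 < a := dist_pos.2 hBC
  have hBAu : B -ᵥ A = u := by rw [vsub_eq_sub, hu]
  have hCAv : C -ᵥ A = v := by rw [vsub_eq_sub, hv]
  have hnu : ‖u‖ = c := by rw [hu, ← dist_eq_norm, dist_comm, hcdef]
  have hnv : ‖v‖ = b := by rw [hv, ← dist_eq_norm, dist_comm, hbdef]
  have huu : ⟪u, u⟫ = c^2 := by rw [real_inner_self_eq_norm_sq, hnu]
  have hvv : ⟪v, v⟫ = b^2 := by rw [real_inner_self_eq_norm_sq, hnv]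
  -- angle at A gives the inner product of u and v
  have huv : ⟪u, v⟫ = -(c*b)/2 := by
    have h1 : ∠ B A C = InnerProductGeometry.angle u v := by
      unfold EuclideanGeometry.angle; rw [hBAu, hCAv]
    have h2 := congrArg Real.cos hA
    rw [h1, InnerProductGeometry.cos_angle, hnu, hnv] at h2
    have h3 : Real.cos (2 * Real.pi / 3) = -(1/2) := by
      rw [show (2:ℝ) * Real.pi / 3 = Real.pi - Real.pi/3 by ring, Real.cos_pi_sub,
        Real.cos_pi_div_three]
    rw [h3] at h2
    rw [div_eq_iff (mul_ne_zero hc.ne' hb.ne')] at h2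
    linarith
  have hvu : ⟪v, u⟫ = -(c*b)/2 := by rw [real_inner_comm]; exact huv
  have hlawcos : a^2 = b^2 + c^2 + b*c := by
    have h1 : a = ‖u - v‖ := by rw [hu, hv, hadef, dist_eq_norm]; congr 1; abel
    have : a^2 = ⟪u - v, u - v⟫ := by rw [real_inner_self_eq_norm_sq, h1]
    rw [this]
    simp only [inner_sub_left, inner_sub_right, huu, hvv, huv, hvu]
    ring
  -- A₁ lies at parameter t = c/(b+c)
  obtain ⟨t, -, hA₁t'⟩ := hA₁.wbtw
  have hA₁t : A₁ = AffineMap.lineMap B C t := hA₁t'.symm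
  have hwA : A₁ -ᵥ A = t • (v - u) + u := by
    simp only [hA₁t, AffineMap.lineMap_apply, vsub_eq_sub, vadd_eq_add, hu, hv]
    module
  have hA₁A : A₁ ≠ A := by
    intro h
    apply hnc
    have := hA₁.wbtw.collinear
    rw [h] at this
    have h2 : ({B, A, C} : Set (EuclideanSpace ℝ (Fin 2))) = {A, B, C} := by
      rw [Set.insert_comm]
    rwa [h2] at this
  have hwAne : ‖t • (v - u) + u‖ ≠ 0 := by
    rw [← hwA, norm_ne_zero_iff]
    exact vsub_ne_zero.mpr hA₁A
  have ht : t = c / (b + c) := by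
    have ha1 : ∠ B A A₁ = InnerProductGeometry.angle u (t • (v - u) + u) := by
      unfold EuclideanGeometry.angle; rw [hBAu, hwA]
    have ha2 : ∠ C A A₁ = InnerProductGeometry.angle v (t • (v - u) + u) := by
      unfold EuclideanGeometry.angle; rw [hCAv, hwA]
    have hcos := congrArg Real.cos hbisA
    rw [ha1, ha2, InnerProductGeometry.cos_angle, InnerProductGeometry.cos_angle,
      hnu, hnv] at hcos
    rw [div_eq_div_iff (mul_ne_zero hc.ne' hwAne) (mul_ne_zero hb.ne' hwAne)] at hcos
    have E : b * ⟪u, t • (v - u) + u⟫ = c * ⟪v, t • (v - u) + u⟫ :=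
      mul_right_cancel₀ hwAne (by linear_combination hcos)
    simp only [inner_add_right, inner_sub_right, real_inner_smul_right,
      huu, hvv, huv, hvu] at E
    have h0 : b*c*(t*(b+c) - c) = 0 := by linear_combination (-2/3 : ℝ)*E
    have h1 : t*(b+c) - c = 0 := by
      rcases mul_eq_zero.mp h0 with h | h
      · exact absurd h (by positivity)
      · exact h
    rw [eq_div_iff (by linarith : (0:ℝ) < b + c).ne']
    linarith
  -- B₁ lies at parameter s = c/(a+c)
  obtain ⟨s, -, hB₁s'⟩ := hB₁.wbtw
  have hB₁s : B₁ = AffineMap.lineMap A C s := hB₁s'.symm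
  have hwB : B₁ -ᵥ B = s • v - u := by
    simp only [hB₁s, AffineMap.lineMap_apply, vsub_eq_sub, vadd_eq_add, hu, hv]
    module
  have hB₁B : B₁ ≠ B := by
    intro h
    apply hnc
    have := hB₁.wbtw.collinear
    rw [h] at this
    have h2 : ({A, B, C} : Set (EuclideanSpace ℝ (Fin 2))) = {A, B, C} := rfl
    rwa [h2] at this
  have hwBne : ‖s • v - u‖ ≠ 0 := by
    rw [← hwB, norm_ne_zero_iff]
    exact vsub_ne_zero.mpr hB₁B
  have hABu : A -ᵥ B = -u := by rw [vsub_eq_sub, hu]; abel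
  have hCBvu : C -ᵥ B = v - u := by rw [vsub_eq_sub, hu, hv]; abel
  have hnu' : ‖(-u : EuclideanSpace ℝ (Fin 2))‖ = c := by rw [norm_neg, hnu]
  have hnvu : ‖v - u‖ = a := by
    rw [hadef, dist_eq_norm, ← norm_neg]; congr 1; rw [hu, hv]; abel
  have haltb : a < b + c := by
    refine lt_of_pow_lt_pow_left₀ 2 (by linarith) ?_
    have h1 : (b+c)^2 = b^2 + 2*(b*c) + c^2 := by ring
    have h2 := mul_pos hb hc
    linarith
  have hs : s = c / (a + c) := by
    have ha1 : ∠ A B B₁ = InnerProductGeometry.angle (-u) (s • v - u) := by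
      unfold EuclideanGeometry.angle; rw [hABu, hwB]
    have ha2 : ∠ C B B₁ = InnerProductGeometry.angle (v - u) (s • v - u) := by
      unfold EuclideanGeometry.angle; rw [hCBvu, hwB]
    have hcos := congrArg Real.cos hbisB
    rw [ha1, ha2, InnerProductGeometry.cos_angle, InnerProductGeometry.cos_angle,
      hnu', hnvu] at hcos
    rw [div_eq_div_iff (mul_ne_zero hc.ne' hwBne) (mul_ne_zero ha.ne' hwBne)] at hcos
    have E : a * ⟪-u, s • v - u⟫ = c * ⟪v - u, s • v - u⟫ :=
      mul_right_cancel₀ hwBne (by linear_combination hcos)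
    simp only [inner_sub_right, inner_sub_left, inner_neg_left, real_inner_smul_right,
      huu, hvv, huv, hvu] at E
    have h0 : c*(b*(2*b+c-a))*(s*(a+c) - c) = 0 := by
      linear_combination (-2*(a+c))*E + 2*c^2*hlawcos
    have h1 : s*(a+c) - c = 0 := by
      rcases mul_eq_zero.mp h0 with h | h
      · have h2b : 0 < 2*b+c-a := by linarith
        have h2c : 0 < c*(b*(2*b+c-a)) := mul_pos hc (mul_pos hb h2b)
        exact absurd h h2c.ne'
      · exact h
    rw [eq_div_iff (by linarith : (0:ℝ) < a + c).ne']
    linarith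
  -- final computation
  have hBQ : B -ᵥ B₁ = u - s • v := by
    simp only [hB₁s, AffineMap.lineMap_apply, vsub_eq_sub, vadd_eq_add, hu, hv]
    module
  have hPQ : A₁ -ᵥ B₁ = u + t • (v - u) - s • v := by
    simp only [hA₁t, hB₁s, AffineMap.lineMap_apply, vsub_eq_sub, vadd_eq_add, hu, hv]
    module
  have hXe : ⟪u - s • v, u + t • (v - u) - s • v⟫ =
      c^2 - c^2*t - b*c*t/2 + b*c*s - b*c*s*t/2 - b^2*s*t + b^2*s^2 := by
    simp only [inner_add_left, inner_add_right, inner_sub_left, inner_sub_right,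
      real_inner_smul_left, real_inner_smul_right, huu, hvv, huv, hvu]
    ring
  have hYe : ‖u - s • v‖^2 = c^2 + b*c*s + b^2*s^2 := by
    rw [← real_inner_self_eq_norm_sq]
    simp only [inner_sub_left, inner_sub_right, real_inner_smul_left, real_inner_smul_right,
      huu, hvv, huv, hvu]
    ring
  have hZe : ‖u + t • (v - u) - s • v‖^2 = c^2 - 2*c^2*t + c^2*t^2 - b*c*t + b*c*t^2
      + b*c*s - b*c*s*t + b^2*t^2 - 2*b^2*s*t + b^2*s^2 := by
    rw [← real_inner_self_eq_norm_sq]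
    simp only [inner_add_left, inner_add_right, inner_sub_left, inner_sub_right,
      real_inner_smul_left, real_inner_smul_right, huu, hvv, huv, hvu]
    ring
  have hXv : ⟪u - s • v, u + t • (v - u) - s • v⟫ = 3*a*b*c^2/(2*((b+c)*(a+c))) := by
    rw [hXe, ht, hs]
    field_simp
    linear_combination (-2*b)*hlawcos
  have hYv : ‖u - s • v‖^2 = c^2*a*(2*a+b+2*c)/((a+c)^2) := by
    rw [hYe, hs]
    field_simp
    linear_combination (-1)*hlawcos
  have hZv : ‖u + t • (v - u) - s • v‖^2 = a*b^2*c^2*(2*a+c-b)/((b+c)^2*(a+c)^2) := by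
    rw [hZe, ht, hs]
    field_simp
    linear_combination (-b^2)*hlawcos
  have hac : (0:ℝ) < a + c := by linarith
  have hbc : (0:ℝ) < b + c := by linarith
  have hab2 : (0:ℝ) < 2*a+b+2*c := by linarith
  have hba : b < a := by
    refine lt_of_pow_lt_pow_left₀ 2 (by linarith) ?_
    have h2 := mul_pos hb hc
    have h3 := pow_pos hc 2
    linarith
  have hacb : (0:ℝ) < 2*a+c-b := by linarith
  have hY0 : (0:ℝ) < ‖u - s • v‖^2 := by
    rw [hYv]
    exact div_pos (mul_pos (mul_pos (pow_pos hc 2) ha) hab2) (pow_pos hac 2)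
  have hZ0 : (0:ℝ) < ‖u + t • (v - u) - s • v‖^2 := by
    rw [hZv]
    exact div_pos (mul_pos (mul_pos (mul_pos ha (pow_pos hb 2)) (pow_pos hc 2)) hacb)
      (mul_pos (pow_pos hbc 2) (pow_pos hac 2))
  have hYp : (0:ℝ) < ‖u - s • v‖ := by
    rcases (norm_nonneg (u - s • v)).lt_or_eq with h | h
    · exact h
    · rw [← h] at hY0; simp at hY0
  have hZp : (0:ℝ) < ‖u + t • (v - u) - s • v‖ := by
    rcases (norm_nonneg (u + t • (v - u) - s • v)).lt_or_eq with h | h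
    · exact h
    · rw [← h] at hZ0; simp at hZ0
  have hXpos : (0:ℝ) < ⟪u - s • v, u + t • (v - u) - s • v⟫ := by
    rw [hXv]
    exact div_pos (mul_pos (mul_pos (mul_pos (by norm_num : (0:ℝ) < 3) ha) hb) (pow_pos hc 2))
      (mul_pos (by norm_num : (0:ℝ) < 2) (mul_pos hbc hac))
  have hr2 : (⟪u - s • v, u + t • (v - u) - s • v⟫ /
      (‖u - s • v‖ * ‖u + t • (v - u) - s • v‖))^2 = 3/4 := by
    rw [div_pow, mul_pow, hYv, hZv, hXv, div_pow]
    field_simp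
    rw [div_eq_iff (ne_of_gt (by linarith))]
    linear_combination (-4)*hlawcos
  have hfrac : ⟪u - s • v, u + t • (v - u) - s • v⟫ /
      (‖u - s • v‖ * ‖u + t • (v - u) - s • v‖) = Real.sqrt 3 / 2 := by
    have h2 : ((Real.sqrt 3)/2)^2 = 3/4 := by
      rw [div_pow, Real.sq_sqrt (by norm_num : (0:ℝ) ≤ 3)]
      norm_num
    have hnn : 0 ≤ ⟪u - s • v, u + t • (v - u) - s • v⟫ /
        (‖u - s • v‖ * ‖u + t • (v - u) - s • v‖) :=
      le_of_lt (div_pos hXpos (mul_pos hYp hZp))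
    have hnn2 : (0:ℝ) ≤ Real.sqrt 3 / 2 := by positivity
    exact (sq_eq_sq₀ hnn hnn2).mp (by rw [hr2, h2])
  have hangle : ∠ B B₁ A₁ =
      InnerProductGeometry.angle (u - s • v) (u + t • (v - u) - s • v) := by
    unfold EuclideanGeometry.angle
    rw [hBQ, hPQ]
  rw [hangle, InnerProductGeometry.angle, hfrac, ← Real.cos_pi_div_six,
    Real.arccos_cos (by positivity) (by linarith [Real.pi_pos])]
end

section
/- In triangle ABC, let AA₁ and BB₁ be the internal bisectors of angles CAB and CBA (A₁ on BC, B₁ on AC). If ∠BB₁A₁ = 30°, then ∠ACB = 60° or ∠BAC = 120°. -/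
open EuclideanGeometry

set_option maxHeartbeats 2000000

noncomputable section

local notation "E2" => EuclideanSpace ℝ (Fin 2)

instance : Fact (Module.finrank ℝ E2 = 2) := ⟨finrank_euclideanSpace_fin⟩

instance : Module.Oriented ℝ E2 (Fin 2) :=
  ⟨(EuclideanSpace.basisFun (Fin 2) ℝ).toBasis.orientation⟩

open Real in
/-- Key trigonometric identity. -/
private lemma key_ident (x y : ℝ) :
    Real.sin (2*x + y - π/6) * Real.cos x * Real.sin (2*y + x)
      - Real.sin (y + π/6) * Real.cos y * Real.sin (2*x + y)
    = Real.sin (2*x + 2*y) * (Real.cos (x + π/6) * Real.sin (x + y - π/3)) := by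
  have h3 : Real.sqrt 3 ^ 2 = 3 := Real.sq_sqrt (by norm_num)
  rw [show 2*x + y - π/6 = (x + x + y) - π/6 by ring,
      show 2*y + x = x + (y + y) by ring,
      show 2*x + y = x + x + y by ring,
      show 2*x + 2*y = (x + y) + (x + y) by ring]
  simp only [Real.sin_add, Real.cos_add, Real.sin_sub, Real.cos_sub,
    Real.sin_pi_div_six, Real.cos_pi_div_six, Real.sin_pi_div_three, Real.cos_pi_div_three]
  linear_combination
    ((7/2:ℝ)*Real.cos x^2*Real.sin y*Real.cos y^2 + (-1)*Real.cos x^2*Real.sin y*Real.cos y^2*Real.sqrt 3^2 + (1/2:ℝ)*Real.cos x^2*Real.sin y^2*Real.cos y*Real.sqrt 3 + (-3/2:ℝ)*Real.cos x^2*Real.sin y^3 + (1/2:ℝ)*Real.cos x^2*Real.sin y^3*Real.sqrt 3^2 + (1:ℝ)*Real.sin x*Real.cos x*Real.cos y^3 + (1:ℝ)*Real.sin x*Real.cos x*Real.sin y*Real.cos y^2*Real.sqrt 3 + (-3/2:ℝ)*Real.sin x*Real.cos x*Real.sin y^2*Real.cos y + (1/2:ℝ)*Real.sin x*Real.cos x*Real.sin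 y^2*Real.cos y*Real.sqrt 3^2 + (-1/2:ℝ)*Real.sin x^2*Real.sin y*Real.cos y^2 + (-1/2:ℝ)*Real.sin x^2*Real.sin y^2*Real.cos y*Real.sqrt 3)
      * (Real.sin_sq_add_cos_sq x)
    + ((-3/2:ℝ)*Real.cos x^2*Real.sin y + (1/2:ℝ)*Real.cos x^2*Real.sin y*Real.sqrt 3^2 + (3/2:ℝ)*Real.cos x^4*Real.sin y + (-1/2:ℝ)*Real.cos x^4*Real.sin y*Real.sqrt 3^2 + (-3/2:ℝ)*Real.sin x*Real.cos x*Real.cos y + (1/2:ℝ)*Real.sin x*Real.cos x*Real.cos y*Real.sqrt 3^2 + (9/2:ℝ)*Real.sin x*Real.cos x^3*Real.cos y + (-3/2:ℝ)*Real.sin x*Real.cos x^3*Real.cos y*Real.sqrt 3^2)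
      * (Real.sin_sq_add_cos_sq y)
    + ((1/2:ℝ)*Real.cos x^2*Real.sin y + (-3/2:ℝ)*Real.cos x^2*Real.sin y*Real.cos y^2 + (-1/2:ℝ)*Real.cos x^4*Real.sin y + (2:ℝ)*Real.cos x^4*Real.sin y*Real.cos y^2 + (1/2:ℝ)*Real.sin x*Real.cos x*Real.cos y + (-1/2:ℝ)*Real.sin x*Real.cos x*Real.cos y^3 + (-3/2:ℝ)*Real.sin x*Real.cos x^3*Real.cos y + (2:ℝ)*Real.sin x*Real.cos x^3*Real.cos y^3)
      * h3

open Real in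
private lemma trig_final {α β γ : ℝ} (hα : 0 < α) (hβ : 0 < β) (hγ : 0 < γ)
    (hsum : α + β + γ = π)
    (hE : Real.sin (α + β/2 - π/6) * Real.cos (α/2) * Real.sin (β + α/2)
        = Real.sin (β/2 + π/6) * Real.cos (β/2) * Real.sin (α + β/2)) :
    γ = π/3 ∨ α = 2*π/3 := by
  have hπ := Real.pi_pos
  have hαπ : α < π := by linarith
  have hk := key_ident (α/2) (β/2)
  rw [show 2*(α/2) + β/2 - π/6 = α + β/2 - π/6 by ring,
      show 2*(β/2) + α/2 = β + α/2 by ring,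
      show 2*(α/2) + β/2 = α + β/2 by ring,
      show 2*(α/2) + 2*(β/2) = α + β by ring] at hk
  have hzero : Real.sin (α+β) * (Real.cos (α/2 + π/6) * Real.sin (α/2 + β/2 - π/3)) = 0 := by
    rw [← hk]; linarith
  have hsin : 0 < Real.sin (α+β) :=
    Real.sin_pos_of_pos_of_lt_pi (by linarith) (by linarith)
  have hcs : Real.cos (α/2 + π/6) = 0 ∨ Real.sin (α/2 + β/2 - π/3) = 0 := by
    rcases mul_eq_zero.mp hzero with h | h
    · exact absurd h hsin.ne'
    · exact mul_eq_zero.mp h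
  rcases hcs with h | h
  · right
    rcases Real.cos_eq_zero_iff.mp h with ⟨k, hkk⟩
    have hk1 : (-1:ℝ) < (k:ℝ) := by nlinarith
    have hk2 : ((k:ℝ)) < 1 := by nlinarith
    have hk0 : k = 0 := by
      have h1 : (-1:ℤ) < k := by exact_mod_cast hk1
      have h2 : (k:ℤ) < 1 := by exact_mod_cast hk2
      omega
    rw [hk0] at hkk
    push_cast at hkk
    linarith
  · left
    rcases Real.sin_eq_zero_iff.mp h with ⟨n, hn⟩
    have hn1 : (-1:ℝ) < (n:ℝ) := by nlinarith
    have hn2 : ((n:ℝ)) < 1 := by nlinarith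
    have hn0 : n = 0 := by
      have h1 : (-1:ℤ) < n := by exact_mod_cast hn1
      have h2 : (n:ℤ) < 1 := by exact_mod_cast hn2
      omega
    rw [hn0] at hn
    push_cast at hn
    linarith

/-- Replacing the right point of an angle by another point on the same ray. -/
private lemma angle_congr_right {q r r' : E2} (p : E2) (hr : r ≠ q) (hr' : r' ≠ q)
    (h : SameRay ℝ (r -ᵥ q) (r' -ᵥ q)) : ∠ p q r = ∠ p q r' := by
  obtain ⟨t, ht, heq⟩ := h.exists_pos_left (vsub_ne_zero.2 hr) (vsub_ne_zero.2 hr')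
  show InnerProductGeometry.angle (p -ᵥ q) (r -ᵥ q) = InnerProductGeometry.angle (p -ᵥ q) (r' -ᵥ q)
  rw [← heq, InnerProductGeometry.angle_smul_right_of_pos _ _ ht]

private lemma angle_congr_left {q r r' : E2} (p : E2) (hr : r ≠ q) (hr' : r' ≠ q)
    (h : SameRay ℝ (r -ᵥ q) (r' -ᵥ q)) : ∠ r q p = ∠ r' q p := by
  rw [angle_comm r q p, angle_comm r' q p]; exact angle_congr_right p hr hr' h

/-- Additivity of unoriented angles over a cevian: if `x` is strictly between `p₁` and `p₃`,
and `q` is not on the line, then `∠ p₁ q x + ∠ x q p₃ = ∠ p₁ q p₃`. -/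
private lemma angle_add_of_sbtw {p₁ x p₃ q : E2} (h : Sbtw ℝ p₁ x p₃)
    (hnc : ¬ Collinear ℝ ({p₁, q, p₃} : Set E2)) :
    ∠ p₁ q x + ∠ x q p₃ = ∠ p₁ q p₃ := by
  have hp₁q : p₁ ≠ q := by
    rintro rfl
    exact hnc (by rw [Set.insert_idem]; exact collinear_pair ℝ p₁ p₃)
  have hp₃q : p₃ ≠ q := by
    rintro rfl
    exact hnc (by rw [Set.pair_eq_singleton]; exact collinear_pair ℝ p₁ p₃)
  have hxq : x ≠ q := by
    rintro rfl
    exact hnc h.wbtw.collinear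
  have hadd := oangle_add hp₁q hxq hp₃q
  have s1 := h.oangle_sign_eq q
  have s2 := h.oangle_sign_eq_left q
  have h3nz : (∡ p₁ q p₃).sign ≠ 0 := fun h0 => hnc (oangle_sign_eq_zero_iff_collinear.mp h0)
  have nc1 : ¬ Collinear ℝ ({p₁, q, x} : Set E2) := fun hc => h3nz (by
    rw [← s2]; exact oangle_sign_eq_zero_iff_collinear.mpr hc)
  have nc2 : ¬ Collinear ℝ ({x, q, p₃} : Set E2) := fun hc => h3nz (by
    rw [← s2, s1]; exact oangle_sign_eq_zero_iff_collinear.mpr hc)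
  have b1 := angle_pos_of_not_collinear nc1
  have b1' := angle_lt_pi_of_not_collinear nc1
  have b2 := angle_pos_of_not_collinear nc2
  have b2' := angle_lt_pi_of_not_collinear nc2
  have b3 := angle_pos_of_not_collinear hnc
  have b3' := angle_lt_pi_of_not_collinear hnc
  have hπ := Real.pi_pos
  have main : ((∠ p₁ q x + ∠ x q p₃ : ℝ) : Real.Angle) = ((∠ p₁ q p₃ : ℝ) : Real.Angle) → 
      ∠ p₁ q x + ∠ x q p₃ = ∠ p₁ q p₃ := by
    intro hcoe
    obtain ⟨k, hk⟩ := Real.Angle.angle_eq_iff_two_pi_dvd_sub.mp hcoe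
    have hk1 : (-1:ℝ) < (k:ℝ) := by nlinarith
    have hk2 : ((k:ℝ)) < 1 := by nlinarith
    have hk0 : k = 0 := by
      have h1 : (-1:ℤ) < k := by exact_mod_cast hk1
      have h2 : (k:ℤ) < 1 := by exact_mod_cast hk2
      omega
    rw [hk0] at hk
    push_cast at hk
    linarith
  rcases hsgn : (∡ p₁ q p₃).sign with _ | _ | _
  · exact absurd hsgn h3nz
  · -- negative sign
    have e3 : ∡ p₁ q p₃ = ↑(-(∠ p₁ q p₃)) :=
      oangle_eq_neg_angle_of_sign_eq_neg_one (by rw [hsgn]; rfl)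
    have e1 : ∡ p₁ q x = ↑(-(∠ p₁ q x)) :=
      oangle_eq_neg_angle_of_sign_eq_neg_one (by rw [s2, hsgn]; rfl)
    have e2 : ∡ x q p₃ = ↑(-(∠ x q p₃)) :=
      oangle_eq_neg_angle_of_sign_eq_neg_one (by rw [← s1, s2, hsgn]; rfl)
    rw [e1, e2, e3, ← Real.Angle.coe_add] at hadd
    apply main
    have := Real.Angle.angle_eq_iff_two_pi_dvd_sub.mp hadd
    obtain ⟨k, hk⟩ := this
    apply Real.Angle.angle_eq_iff_two_pi_dvd_sub.mpr
    exact ⟨-k, by push_cast; linarith⟩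
  · -- positive sign
    have e3 : ∡ p₁ q p₃ = ↑(∠ p₁ q p₃) :=
      oangle_eq_angle_of_sign_eq_one (by rw [hsgn]; rfl)
    have e1 : ∡ p₁ q x = ↑(∠ p₁ q x) :=
      oangle_eq_angle_of_sign_eq_one (by rw [s2, hsgn]; rfl)
    have e2 : ∡ x q p₃ = ↑(∠ x q p₃) :=
      oangle_eq_angle_of_sign_eq_one (by rw [← s1, s2, hsgn]; rfl)
    rw [e1, e2, e3, ← Real.Angle.coe_add] at hadd
    exact main hadd

/-- twice-area form of the law of sines. -/
private lemma sin_area (p₁ p₂ p₃ : E2) :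
    Real.sin (∠ p₂ p₁ p₃) * (dist p₁ p₂ * dist p₁ p₃)
      = Real.sin (∠ p₁ p₂ p₃) * (dist p₂ p₁ * dist p₂ p₃) := by
  rw [dist_eq_norm_vsub' E2 p₁ p₂, dist_eq_norm_vsub' E2 p₁ p₃,
      dist_eq_norm_vsub' E2 p₂ p₁, dist_eq_norm_vsub' E2 p₂ p₃]
  show Real.sin (InnerProductGeometry.angle (p₂ -ᵥ p₁) (p₃ -ᵥ p₁)) * _
      = Real.sin (InnerProductGeometry.angle (p₁ -ᵥ p₂) (p₃ -ᵥ p₂)) * _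
  rw [InnerProductGeometry.sin_angle_mul_norm_mul_norm,
      InnerProductGeometry.sin_angle_mul_norm_mul_norm]
  congr 1
  have h1 : p₁ -ᵥ p₂ = -(p₂ -ᵥ p₁) := by rw [neg_vsub_eq_vsub_rev]
  have h2 : p₃ -ᵥ p₂ = (p₃ -ᵥ p₁) - (p₂ -ᵥ p₁) := by rw [vsub_sub_vsub_cancel_right]
  rw [h1, h2]
  simp only [inner_neg_left, inner_neg_right, inner_sub_left, inner_sub_right,
    real_inner_comm (p₃ -ᵥ p₁) (p₂ -ᵥ p₁)]
  ring

theorem stmt13 (A B C A₁ B₁ : EuclideanSpace ℝ (Fin 2))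
    (hABC : AffineIndependent ℝ ![A, B, C])
    (hA₁ : Sbtw ℝ B A₁ C) (hbisA : ∠ B A A₁ = ∠ C A A₁)
    (hB₁ : Sbtw ℝ A B₁ C) (hbisB : ∠ A B B₁ = ∠ C B B₁)
    (hang : ∠ B B₁ A₁ = Real.pi / 6) :
    ∠ A C B = Real.pi / 3 ∨ ∠ B A C = 2 * Real.pi / 3 := by
  have ncABC : ¬ Collinear ℝ ({A, B, C} : Set E2) :=
    affineIndependent_iff_not_collinear_set.mp hABC
  have ncBAC : ¬ Collinear ℝ ({B, A, C} : Set E2) := fun hc => ncABC (hc.subset (by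
    intro y hy; simp only [Set.mem_insert_iff, Set.mem_singleton_iff] at *; tauto))
  have ncACB : ¬ Collinear ℝ ({A, C, B} : Set E2) := fun hc => ncABC (hc.subset (by
    intro y hy; simp only [Set.mem_insert_iff, Set.mem_singleton_iff] at *; tauto))
  -- basic distinctness
  have hAB : A ≠ B := by
    rintro rfl
    exact ncABC ((collinear_pair ℝ A C).subset (by
      intro y hy; simp only [Set.mem_insert_iff, Set.mem_singleton_iff] at *; tauto))
  have hAC : A ≠ C := by
    rintro rfl
    exact ncABC ((collinear_pair ℝ A B).subset (by
      intro y hy; simp only [Set.mem_insert_iff, Set.mem_singleton_iff] at *; tauto))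
  have hBC : B ≠ C := by
    rintro rfl
    exact ncABC ((collinear_pair ℝ A B).subset (by
      intro y hy; simp only [Set.mem_insert_iff, Set.mem_singleton_iff] at *; tauto))
  have hA₁A : A₁ ≠ A := by
    intro h; apply ncBAC; have := hA₁.wbtw.collinear; rwa [h] at this
  have hB₁B : B₁ ≠ B := by
    intro h; apply ncABC; have := hB₁.wbtw.collinear; rwa [h] at this
  have hcolAB₁C : Collinear ℝ ({A, B₁, C} : Set E2) := hB₁.wbtw.collinear
  have ncBB₁C : ¬ Collinear ℝ ({B, B₁, C} : Set E2) := by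
    intro hc
    apply ncABC
    have h2 : Collinear ℝ (insert A ({B, B₁, C} : Set E2)) :=
      (hc.collinear_insert_iff_of_ne (p₁ := A) (by simp) (by simp) hB₁.ne_right).mpr hcolAB₁C
    exact h2.subset (by
      intro y hy; simp only [Set.mem_insert_iff, Set.mem_singleton_iff] at *; tauto)
  have hA₁B₁ : A₁ ≠ B₁ := by
    intro h; apply ncBB₁C; have := hA₁.wbtw.collinear; rwa [h] at this
  -- ray replacements
  have hray1 : ∠ B A B₁ = ∠ B A C :=
    angle_congr_right B hB₁.ne_left hAC.symm hB₁.wbtw.sameRay_vsub_left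
  have hrayi : ∠ A₁ C B₁ = ∠ B C B₁ :=
    angle_congr_left B₁ hA₁.ne_right hBC hA₁.symm.wbtw.sameRay_vsub_left
  have hrayii : ∠ B C B₁ = ∠ B C A :=
    angle_congr_right B hB₁.ne_right hAC hB₁.symm.wbtw.sameRay_vsub_left
  have hray2 : ∠ A₁ C A = ∠ B C A :=
    angle_congr_left A hA₁.ne_right hBC hA₁.symm.wbtw.sameRay_vsub_left
  -- angle splits along cevians
  have hsplitA : ∠ B A A₁ + ∠ A₁ A C = ∠ B A C := angle_add_of_sbtw hA₁ ncBAC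
  have hsplitB : ∠ A B B₁ + ∠ B₁ B C = ∠ A B C := angle_add_of_sbtw hB₁ ncABC
  have hsplitB₁ : ∠ B B₁ A₁ + ∠ A₁ B₁ C = ∠ B B₁ C := angle_add_of_sbtw hA₁ ncBB₁C
  -- commutations
  have hc1 : ∠ C A A₁ = ∠ A₁ A C := angle_comm _ _ _
  have hc2 : ∠ C B B₁ = ∠ B₁ B C := angle_comm _ _ _
  have hc3 : ∠ B₁ A B = ∠ B A B₁ := angle_comm _ _ _
  have hc4 : ∠ B C A = ∠ A C B := angle_comm _ _ _
  have hc5 : ∠ C A B = ∠ B A C := angle_comm _ _ _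
  have hc6 : ∠ C B₁ A₁ = ∠ A₁ B₁ C := angle_comm _ _ _
  -- triangle angle sums
  have T0 : ∠ A B C + ∠ B C A + ∠ C A B = Real.pi :=
    angle_add_angle_add_angle_eq_pi C hAB.symm
  have T1 : ∠ A B B₁ + ∠ B B₁ A + ∠ B₁ A B = Real.pi :=
    angle_add_angle_add_angle_eq_pi B₁ hAB.symm
  have T2 : ∠ B₁ A₁ C + ∠ A₁ C B₁ + ∠ C B₁ A₁ = Real.pi :=
    angle_add_angle_add_angle_eq_pi C hA₁B₁
  have T3 : ∠ A A₁ C + ∠ A₁ C A + ∠ C A A₁ = Real.pi :=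
    angle_add_angle_add_angle_eq_pi C hA₁A
  have hlinB₁ : ∠ B B₁ A + ∠ B B₁ C = Real.pi :=
    angle_add_angle_eq_pi_of_angle_eq_pi B hB₁.angle₁₂₃_eq_pi
  have hsum : ∠ B A C + ∠ A B C + ∠ A C B = Real.pi := by linarith
  -- derived angle values
  have hval_half_A : ∠ A₁ A C = ∠ B A C / 2 := by linarith
  have hval_half_B : ∠ B₁ B C = ∠ A B C / 2 := by linarith
  have hval_BB₁C : ∠ B B₁ C = ∠ B A C + ∠ A B C / 2 := by linarith
  have hδ : ∠ A₁ B₁ C = ∠ B A C + ∠ A B C / 2 - Real.pi / 6 := by linarith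
  have hB₁A₁C : ∠ B₁ A₁ C = ∠ A B C / 2 + Real.pi / 6 := by linarith
  have hAA₁C : ∠ A A₁ C = ∠ A B C + ∠ B A C / 2 := by linarith
  -- positivity
  have hαpos : 0 < ∠ B A C := angle_pos_of_not_collinear ncBAC
  have hβpos : 0 < ∠ A B C := angle_pos_of_not_collinear ncABC
  have hγpos : 0 < ∠ A C B := angle_pos_of_not_collinear ncACB
  have ha : (0:ℝ) < dist B C := dist_pos.mpr hBC
  have hb : (0:ℝ) < dist A C := dist_pos.mpr hAC
  have hd1 : (0:ℝ) < dist B₁ A₁ := dist_pos.mpr hA₁B₁.symm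
  have hd2 : (0:ℝ) < dist B B₁ := dist_pos.mpr hB₁B.symm
  have hd3 : (0:ℝ) < dist A A₁ := dist_pos.mpr hA₁A.symm
  have hd4 : (0:ℝ) < dist A B := dist_pos.mpr hAB
  -- law of sines (area form) in the four triangles
  have L1 := sin_area B₁ A₁ C
  have L2 := sin_area B B₁ C
  have L3 := sin_area A A₁ C
  have L4 := sin_area A B C
  rw [dist_comm A₁ B₁] at L1
  rw [dist_comm B₁ B] at L2
  rw [dist_comm A₁ A] at L3
  rw [dist_comm B A] at L4
  have h1 : Real.sin (∠ A₁ B₁ C) * dist B₁ C = Real.sin (∠ B₁ A₁ C) * dist A₁ C :=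
    mul_left_cancel₀ hd1.ne' (by linear_combination L1)
  have h2 : Real.sin (∠ B₁ B C) * dist B C = Real.sin (∠ B B₁ C) * dist B₁ C :=
    mul_left_cancel₀ hd2.ne' (by linear_combination L2)
  have h3 : Real.sin (∠ A₁ A C) * dist A C = Real.sin (∠ A A₁ C) * dist A₁ C :=
    mul_left_cancel₀ hd3.ne' (by linear_combination L3)
  have h4 : Real.sin (∠ B A C) * dist A C = Real.sin (∠ A B C) * dist B C :=
    mul_left_cancel₀ hd4.ne' (by linear_combination L4)
  rw [hδ, hB₁A₁C] at h1
  rw [hval_half_B, hval_BB₁C] at h2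
  rw [hval_half_A, hAA₁C] at h3
  -- double angle formulas
  have L5 : Real.sin (∠ B A C) = 2 * Real.sin (∠ B A C / 2) * Real.cos (∠ B A C / 2) := by
    have h := Real.sin_two_mul (∠ B A C / 2)
    rw [show 2 * (∠ B A C / 2) = ∠ B A C by ring] at h
    linarith
  have L6 : Real.sin (∠ A B C) = 2 * Real.sin (∠ A B C / 2) * Real.cos (∠ A B C / 2) := by
    have h := Real.sin_two_mul (∠ A B C / 2)
    rw [show 2 * (∠ A B C / 2) = ∠ A B C by ring] at h
    linarith
  -- positive sines
  have hsx : 0 < Real.sin (∠ B A C / 2) :=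
    Real.sin_pos_of_pos_of_lt_pi (by linarith) (by linarith [Real.pi_pos])
  have hsy : 0 < Real.sin (∠ A B C / 2) :=
    Real.sin_pos_of_pos_of_lt_pi (by linarith) (by linarith [Real.pi_pos])
  have h5 : Real.sin (∠ B A C + ∠ A B C / 2 - Real.pi / 6) * Real.sin (∠ A B C / 2)
        * Real.sin (∠ B A C) * Real.sin (∠ A B C + ∠ B A C / 2)
      = Real.sin (∠ A B C / 2 + Real.pi / 6) * Real.sin (∠ B A C / 2)
        * Real.sin (∠ A B C) * Real.sin (∠ B A C + ∠ A B C / 2) := by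
    apply mul_right_cancel₀ ha.ne'
    linear_combination
      (Real.sin (∠ B A C + ∠ A B C / 2 - Real.pi / 6) * Real.sin (∠ B A C)
        * Real.sin (∠ A B C + ∠ B A C / 2)) * h2
      + (Real.sin (∠ B A C) * Real.sin (∠ B A C + ∠ A B C / 2)
          * Real.sin (∠ A B C + ∠ B A C / 2)) * h1
      - (Real.sin (∠ B A C) * Real.sin (∠ B A C + ∠ A B C / 2)
          * Real.sin (∠ A B C / 2 + Real.pi / 6)) * h3
      + (Real.sin (∠ B A C + ∠ A B C / 2) * Real.sin (∠ A B C / 2 + Real.pi / 6)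
          * Real.sin (∠ B A C / 2)) * h4
  have hone : (2 : ℝ) * (Real.sin (∠ B A C / 2) * Real.sin (∠ A B C / 2)) ≠ 0 := by positivity
  have h6 : Real.sin (∠ B A C + ∠ A B C / 2 - Real.pi / 6) * Real.cos (∠ B A C / 2)
        * Real.sin (∠ A B C + ∠ B A C / 2)
      = Real.sin (∠ A B C / 2 + Real.pi / 6) * Real.cos (∠ A B C / 2)
        * Real.sin (∠ B A C + ∠ A B C / 2) := by
    apply mul_right_cancel₀ hone
    linear_combination h5
      - (Real.sin (∠ A B C / 2) * Real.sin (∠ A B C + ∠ B A C / 2)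
          * Real.sin (∠ B A C + ∠ A B C / 2 - Real.pi / 6)) * L5
      + (Real.sin (∠ A B C / 2 + Real.pi / 6) * Real.sin (∠ B A C / 2)
          * Real.sin (∠ B A C + ∠ A B C / 2)) * L6
  exact trig_final hαpos hβpos hγpos hsum h6

end
end

section
/- If in triangle ABC the angle ∠BAC = 120° and AA₁ is the internal bisector from A (A₁ on BC), and B₁ is the foot of the internal bisector from B (B₁ on AC), then the line A₁B₁ bisects the angle ∠CA₁A, and A₁C₁ ⊥ A₁B₁ where C₁ is the foot of the internal bisector from C on AB. -/
open EuclideanGeometry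

local notation "E2" => EuclideanSpace ℝ (Fin 2)

private lemma pair_ind {P Q R : E2} (h : ¬ Collinear ℝ ({P, Q, R} : Set E2)) :
    ∀ s t : ℝ, s • (Q - P) + t • (R - P) = 0 → s = 0 ∧ t = 0 := by
  intro s t hst
  by_contra hcon
  apply h
  rw [collinear_iff_of_mem (Set.mem_insert P {Q, R})]
  rcases eq_or_ne t 0 with ht | ht
  · subst ht
    have hs : s ≠ 0 := by tauto
    have hQP : Q = P := by
      have h0 : s • (Q - P) = 0 := by simpa using hst
      rcases smul_eq_zero.mp h0 with h' | h'
      · exact absurd h' hs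
      · exact sub_eq_zero.mp h'
    refine ⟨R - P, fun p hp => ?_⟩
    simp only [Set.mem_insert_iff, Set.mem_singleton_iff] at hp
    rcases hp with rfl | rfl | rfl
    · exact ⟨0, by simp⟩
    · exact ⟨0, by simp [hQP]⟩
    · exact ⟨1, by simp⟩
  · have h6 : t • (R - P) = -(s • (Q - P)) := eq_neg_of_add_eq_zero_right hst
    have hRP : R - P = (-s / t) • (Q - P) := by
      rw [show R - P = t⁻¹ • (t • (R - P)) by rw [smul_smul, inv_mul_cancel₀ ht, one_smul], h6]
      match_scalars <;> (field_simp; try ring; try tauto)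
    refine ⟨Q - P, fun p hp => ?_⟩
    simp only [Set.mem_insert_iff, Set.mem_singleton_iff] at hp
    rcases hp with rfl | rfl | rfl
    · exact ⟨0, by simp⟩
    · exact ⟨1, by simp⟩
    · exact ⟨-s / t, by rw [← hRP]; simp⟩

private lemma bisector_foot {P Q R X : E2} (h : ¬ Collinear ℝ ({P, Q, R} : Set E2))
    (hX : Sbtw ℝ Q X R) (hbis : ∠ Q P X = ∠ R P X) :
    X - P = (‖Q - P‖ + ‖R - P‖)⁻¹ • (‖R - P‖ • (Q - P) + ‖Q - P‖ • (R - P)) := by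
  have hpi := pair_ind h
  have hu0 : Q - P ≠ 0 := fun h0 => by simpa using (hpi 1 0 (by simp [h0])).1
  have hv0 : R - P ≠ 0 := fun h0 => by simpa using (hpi 0 1 (by simp [h0])).2
  set u := Q - P with hu
  set v := R - P with hv
  set q := ‖u‖ with hq'
  set r := ‖v‖ with hr'
  have hq : 0 < q := norm_pos_iff.mpr hu0
  have hr : 0 < r := norm_pos_iff.mpr hv0
  obtain ⟨t, ht, hXt⟩ : ∃ t : ℝ, t ∈ Set.Icc (0:ℝ) 1 ∧ Q + t • (R - Q) = X := by
    have hseg := hX.wbtw.mem_segment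
    rw [segment_eq_image'] at hseg
    obtain ⟨t, ht, hXe⟩ := hseg
    exact ⟨t, ht, hXe⟩
  have hw : X - P = (1 - t) • u + t • v := by
    rw [← hXt, hu, hv]; module
  have hXP : X - P ≠ 0 := by
    intro h0
    rw [hw] at h0
    obtain ⟨h1, h2⟩ := hpi _ _ h0
    rw [h2] at h1; norm_num at h1
  have hnw : 0 < ‖X - P‖ := norm_pos_iff.mpr hXP
  have hcos : inner ℝ u (X - P) / (q * ‖X - P‖) = (inner ℝ v (X - P) : ℝ) / (r * ‖X - P‖) := by
    have h1 := congrArg Real.cos hbis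
    rw [EuclideanGeometry.angle, EuclideanGeometry.angle, vsub_eq_sub, vsub_eq_sub, vsub_eq_sub,
      InnerProductGeometry.cos_angle, InnerProductGeometry.cos_angle] at h1
    exact h1
  have h2 := (div_eq_div_iff (by positivity) (by positivity)).mp hcos
  have hinner : (inner ℝ u (X - P) : ℝ) * r = (inner ℝ v (X - P) : ℝ) * q := by
    have h3 : ((inner ℝ u (X - P) : ℝ) * r) * ‖X - P‖ = ((inner ℝ v (X - P) : ℝ) * q) * ‖X - P‖ := by
      linear_combination h2
    exact mul_right_cancel₀ (ne_of_gt hnw) h3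
  have hp : (inner ℝ u v : ℝ) < q * r := by
    rw [inner_lt_norm_mul_iff_real]
    intro heq
    have h4 : r • u + (-q) • v = 0 := by
      rw [neg_smul, heq, hq']; abel
    have := (hpi r (-q) h4).1
    exact absurd this (ne_of_gt hr)
  have hexp : (q * r - (inner ℝ u v : ℝ)) * ((1 - t) * q - t * r) = 0 := by
    rw [hw] at hinner
    simp only [inner_add_right, real_inner_smul_right, real_inner_self_eq_norm_sq] at hinner
    rw [real_inner_comm u v] at hinner
    rw [← hq', ← hr'] at hinner
    linear_combination hinner
  have hqr : q * r - (inner ℝ u v : ℝ) ≠ 0 := ne_of_gt (by linarith)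
  have ht2 : (1 - t) * q - t * r = 0 := by
    rcases mul_eq_zero.mp hexp with h' | h'
    · exact absurd h' hqr
    · exact h'
  have hqrne : q + r ≠ 0 := by positivity
  have htval : t = q / (q + r) := by
    field_simp
    linarith
  rw [hw, htval]
  match_scalars <;> (field_simp; try ring; try tauto)

set_option maxHeartbeats 1600000 in
theorem stmt15 (A B C A₁ B₁ C₁ : EuclideanSpace ℝ (Fin 2))
    (hABC : AffineIndependent ℝ ![A, B, C])
    (hA₁ : Sbtw ℝ B A₁ C) (hbisA : ∠ B A A₁ = ∠ C A A₁)
    (hB₁ : Sbtw ℝ A B₁ C) (hbisB : ∠ A B B₁ = ∠ C B B₁)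
    (hC₁ : Sbtw ℝ A C₁ B) (hbisC : ∠ A C C₁ = ∠ B C C₁)
    (hA : ∠ B A C = 2 * Real.pi / 3) :
    ∠ C A₁ B₁ = ∠ B₁ A₁ A ∧ ∠ B₁ A₁ C₁ = Real.pi / 2 := by
  have hnc : ¬ Collinear ℝ ({A, B, C} : Set (EuclideanSpace ℝ (Fin 2))) := by
    rw [← affineIndependent_iff_not_collinear_set]; exact hABC
  have hsetB : ({B, A, C} : Set (EuclideanSpace ℝ (Fin 2))) = {A, B, C} := by
    ext x; simp only [Set.mem_insert_iff, Set.mem_singleton_iff]; tauto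
  have hsetC : ({C, A, B} : Set (EuclideanSpace ℝ (Fin 2))) = {A, B, C} := by
    ext x; simp only [Set.mem_insert_iff, Set.mem_singleton_iff]; tauto
  have hncB : ¬ Collinear ℝ ({B, A, C} : Set (EuclideanSpace ℝ (Fin 2))) := by
    rw [hsetB]; exact hnc
  have hncC : ¬ Collinear ℝ ({C, A, B} : Set (EuclideanSpace ℝ (Fin 2))) := by
    rw [hsetC]; exact hnc
  have hpi := pair_ind hnc
  have hu0 : B - A ≠ 0 := fun h0 => by simpa using (hpi 1 0 (by simp [h0])).1
  have hv0 : C - A ≠ 0 := fun h0 => by simpa using (hpi 0 1 (by simp [h0])).2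
  set u := B - A with hu
  set v := C - A with hv
  set c := ‖u‖ with hcdef
  set b := ‖v‖ with hbdef
  have hvu : v - u = C - B := by rw [hu, hv]; abel
  have hvu0 : v - u ≠ 0 := by
    intro h0
    have h4 : (-1 : ℝ) • u + (1 : ℝ) • v = 0 := by
      rw [neg_smul, one_smul, one_smul, ← sub_eq_neg_add, h0]
    simpa using (hpi _ _ h4).2
  set a := ‖v - u‖ with hadef
  have hb : 0 < b := norm_pos_iff.mpr hv0
  have hc : 0 < c := norm_pos_iff.mpr hu0
  have ha : 0 < a := norm_pos_iff.mpr hvu0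
  -- foot of bisector from A
  have h1 : A₁ - A = (c + b)⁻¹ • (b • u + c • v) := bisector_foot hnc hA₁ hbisA
  -- foot of bisector from B
  have h2 : B₁ - B = (‖A - B‖ + ‖C - B‖)⁻¹ • (‖C - B‖ • (A - B) + ‖A - B‖ • (C - B)) :=
    bisector_foot hncB hB₁ hbisB
  have h3 : C₁ - C = (‖A - C‖ + ‖B - C‖)⁻¹ • (‖B - C‖ • (A - C) + ‖A - C‖ • (B - C)) :=
    bisector_foot hncC hC₁ hbisC
  have eAB : A - B = -u := by rw [hu]; abel
  have eCB : C - B = v - u := by rw [hu, hv]; abel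
  have eAC : A - C = -v := by rw [hv]; abel
  have eBC : B - C = -(v - u) := by rw [hu, hv]; abel
  have nAB : ‖A - B‖ = c := by rw [eAB, norm_neg]
  have nCB : ‖C - B‖ = a := by rw [eCB]
  have nAC : ‖A - C‖ = b := by rw [eAC, norm_neg]
  have nBC : ‖B - C‖ = a := by rw [eBC, norm_neg]
  rw [nAB, nCB, eAB, eCB] at h2
  rw [nAC, nBC, eAC, eBC] at h3
  -- inner product value
  have hbcne : b * c ≠ 0 := by positivity
  have hpval : (inner ℝ u v : ℝ) = -(c * b) / 2 := by
    have h4 := congrArg Real.cos hA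
    rw [EuclideanGeometry.angle, vsub_eq_sub, vsub_eq_sub, InnerProductGeometry.cos_angle,
      ← hu, ← hv, ← hcdef, ← hbdef] at h4
    rw [show (2 * Real.pi / 3 : ℝ) = Real.pi - Real.pi / 3 by ring, Real.cos_pi_sub,
      Real.cos_pi_div_three] at h4
    rw [div_eq_iff (by positivity : c * b ≠ 0)] at h4
    rw [h4]; ring
  have ha2 : a ^ 2 = b ^ 2 + c ^ 2 + b * c := by
    rw [hadef, norm_sub_sq_real, real_inner_comm u v, hpval, ← hbdef, ← hcdef]
    ring
  -- scaled vector identities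
  have hcbne : c + b ≠ 0 := by positivity
  have hcane : c + a ≠ 0 := by positivity
  have habne : a + b ≠ 0 := by positivity
  have hbcne' : b + c ≠ 0 := by positivity
  have hB₁A : B₁ - A = (c / (c + a)) • v := by
    have e : B₁ - A = (B₁ - B) + u := by rw [hu]; abel
    rw [e, h2]
    match_scalars <;> (field_simp; try ring; try tauto)
  have hC₁A : C₁ - A = (b / (a + b)) • u := by
    have e : C₁ - A = (C₁ - C) + v := by rw [hv]; abel
    rw [e, h3]
    match_scalars <;> (field_simp; try ring; try tauto)
  have hW : ((b + c) * (c + a)) • (B₁ - A₁) = (-(b * (c + a))) • u + (c * (b - a)) • v := by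
    have e : B₁ - A₁ = (B₁ - A) - (A₁ - A) := by abel
    rw [e, hB₁A, h1]
    match_scalars <;> (field_simp; try ring; try tauto)
  have hV : ((b + c) * (a + b)) • (C₁ - A₁) = (b * (c - a)) • u + (-(c * (a + b))) • v := by
    have e : C₁ - A₁ = (C₁ - A) - (A₁ - A) := by abel
    rw [e, hC₁A, h1]
    match_scalars <;> (field_simp; try ring; try tauto)
  have hXc : (b + c) • (C - A₁) = b • v + (-b) • u := by
    have e : C - A₁ = v - (A₁ - A) := by rw [hv]; abel
    rw [e, h1]
    match_scalars <;> (field_simp; try ring; try tauto)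
  have hXa : (b + c) • (A - A₁) = (-b) • u + (-c) • v := by
    have e : A - A₁ = -(A₁ - A) := by abel
    rw [e, h1]
    match_scalars <;> (field_simp; try ring; try tauto)
  -- B₁ ≠ A₁
  have hWne : B₁ - A₁ ≠ 0 := by
    intro h0
    rw [h0, smul_zero] at hW
    have h4 := (hpi (-(b * (c + a))) (c * (b - a)) hW.symm).1
    have h6 : b * (c + a) > 0 := by positivity
    linarith
  have hnW : 0 < ‖B₁ - A₁‖ := norm_pos_iff.mpr hWne
  constructor
  · -- ∠ C A₁ B₁ = ∠ B₁ A₁ A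
    -- norms
    have hCA₁ : C - A₁ = (b / (b + c)) • (v - u) := by
      have e : C - A₁ = (b + c)⁻¹ • ((b + c) • (C - A₁)) := by
        rw [smul_smul, inv_mul_cancel₀ hbcne', one_smul]
      rw [e, hXc]
      match_scalars <;> (field_simp; try ring; try tauto)
    have hnC : ‖C - A₁‖ = b * a / (b + c) := by
      rw [hCA₁, norm_smul, Real.norm_eq_abs, abs_of_pos (by positivity), ← hadef]
      ring
    have hbn : ‖b • u + c • v‖ = b * c := by
      have hsq : ‖b • u + c • v‖ ^ 2 = (b * c) ^ 2 := by
        rw [norm_add_sq_real, norm_smul, norm_smul, real_inner_smul_left,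
          real_inner_smul_right, hpval, Real.norm_eq_abs, Real.norm_eq_abs,
          abs_of_pos hb, abs_of_pos hc, ← hcdef, ← hbdef]
        ring
      calc ‖b • u + c • v‖ = Real.sqrt (‖b • u + c • v‖ ^ 2) :=
            (Real.sqrt_sq (norm_nonneg _)).symm
        _ = Real.sqrt ((b * c) ^ 2) := by rw [hsq]
        _ = b * c := Real.sqrt_sq (by positivity)
    have hAA₁ : A - A₁ = (-(c + b)⁻¹) • (b • u + c • v) := by
      have e : A - A₁ = -(A₁ - A) := by abel
      rw [e, h1, neg_smul]
    have hnA : ‖A - A₁‖ = b * c / (b + c) := by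
      rw [hAA₁, norm_smul, Real.norm_eq_abs, abs_neg, abs_inv, abs_of_pos (by positivity), hbn]
      ring
    -- inner product values
    have hI1 : (b + c) * (((b + c) * (c + a)) * (inner ℝ (C - A₁) (B₁ - A₁) : ℝ)) =
        b^2*c^3 + b^3*c^2 + b^4*c + (1/2)*a*b^2*c^2 - (1/2)*a*b^3*c := by
      have e := congrArg₂ (fun (x y : EuclideanSpace ℝ (Fin 2)) => (inner ℝ x y : ℝ)) hXc hW
      simp only [real_inner_smul_left, real_inner_smul_right, inner_add_left, inner_add_right,
        real_inner_self_eq_norm_sq, real_inner_comm u v] at e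
      rw [← hcdef, ← hbdef, hpval] at e
      linear_combination e
    have hI2 : ((b + c) * (c + a)) * ((b + c) * (inner ℝ (B₁ - A₁) (A - A₁) : ℝ)) =
        (1/2)*b^2*c^3 - (1/2)*b^3*c^2 + a*b^2*c^2 := by
      have e := congrArg₂ (fun (x y : EuclideanSpace ℝ (Fin 2)) => (inner ℝ x y : ℝ)) hW hXa
      simp only [real_inner_smul_left, real_inner_smul_right, inner_add_left, inner_add_right,
        real_inner_self_eq_norm_sq, real_inner_comm u v] at e
      rw [← hcdef, ← hbdef, hpval] at e
      linear_combination e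
    have hval1 : (inner ℝ (C - A₁) (B₁ - A₁) : ℝ) =
        (b^2*c^3 + b^3*c^2 + b^4*c + (1/2)*a*b^2*c^2 - (1/2)*a*b^3*c) / ((b+c)^2 * (c+a)) := by
      rw [eq_div_iff (by positivity)]
      linear_combination hI1
    have hval2 : (inner ℝ (B₁ - A₁) (A - A₁) : ℝ) =
        ((1/2)*b^2*c^3 - (1/2)*b^3*c^2 + a*b^2*c^2) / ((b+c)^2 * (c+a)) := by
      rw [eq_div_iff (by positivity)]
      linear_combination hI2
    show InnerProductGeometry.angle (C -ᵥ A₁) (B₁ -ᵥ A₁) =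
        InnerProductGeometry.angle (B₁ -ᵥ A₁) (A -ᵥ A₁)
    rw [vsub_eq_sub, vsub_eq_sub, vsub_eq_sub, InnerProductGeometry.angle,
      InnerProductGeometry.angle]
    congr 1
    rw [hval1, hval2, hnC, hnA]
    rw [div_eq_div_iff (by positivity) (by positivity)]
    field_simp
    ring_nf
    linear_combination (-2) * ha2
  · -- ∠ B₁ A₁ C₁ = π / 2
    have key : (((b + c) * (c + a)) * (((b + c) * (a + b)) * (inner ℝ (B₁ - A₁) (C₁ - A₁) : ℝ)))
        = 0 := by
      have e := congrArg₂ (fun (x y : EuclideanSpace ℝ (Fin 2)) => (inner ℝ x y : ℝ)) hW hV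
      simp only [real_inner_smul_left, real_inner_smul_right, inner_add_left, inner_add_right,
        real_inner_self_eq_norm_sq, real_inner_comm u v] at e
      rw [← hcdef, ← hbdef, hpval] at e
      linear_combination e + (b^2 * c^2) * ha2
    have h5 : (inner ℝ (B₁ - A₁) (C₁ - A₁) : ℝ) = 0 := by
      rcases mul_eq_zero.mp key with h' | h'
      · exact absurd h' (by positivity)
      · rcases mul_eq_zero.mp h' with h'' | h''
        · exact absurd h'' (by positivity)
        · exact h''
    show InnerProductGeometry.angle (B₁ -ᵥ A₁) (C₁ -ᵥ A₁) = Real.pi / 2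
    rw [vsub_eq_sub, vsub_eq_sub]
    exact (InnerProductGeometry.inner_eq_zero_iff_angle_eq_pi_div_two _ _).mp h5
end
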